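/- arXiv:1002.3093 — 6 statements merged into one kernel-verified Lean document; each statement's English description precedes it below -/
import Mathlib

section
/- Let Z be a (G,H)-equivalence and let L = G ⊔ Z ⊔ Z^op ⊔ H with unit space L^(0) = G^(0) ⊔ H^(0), with range and source maps inherited from G, Z, Z^op, H, multiplication restricting to multiplication on G and H and to the actions of G and H on Z and Z^op, together with z·ȳ = _G[z,y] (for s(z)=s(y)) and ȳ·z = [y,z]_H (for r(y)=r(z)), and inversion restricting to inversion on G and H and swapping z ↔ z̄. Then L is a groupoid. -/
open MeasureTheory Topology

/-- A (topological) groupoid: a space `G` with range and source maps `r s : G → G`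
(whose common image is the unit space), a partially defined multiplication and an
inversion, all continuous. -/
structure TopGpd (G : Type*) [TopologicalSpace G] where
  r : G → G
  s : G → G
  mul : (x y : G) → s x = r y → G
  inv : G → G
  r_r : ∀ x, r (r x) = r x
  s_r : ∀ x, s (r x) = r x
  r_s : ∀ x, r (s x) = s x
  s_s : ∀ x, s (s x) = s x
  r_mul : ∀ x y h, r (mul x y h) = r x
  s_mul : ∀ x y h, s (mul x y h) = s y
  unit_mul : ∀ x (h : s (r x) = r x), mul (r x) x h = x
  mul_unit : ∀ x (h : s x = r (s x)), mul x (s x) h = x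
  mul_assoc : ∀ x y z (h₁ : s x = r y) (h₂ : s y = r z)
      (h₃ : s (mul x y h₁) = r z) (h₄ : s x = r (mul y z h₂)),
      mul (mul x y h₁) z h₃ = mul x (mul y z h₂) h₄
  r_inv : ∀ x, r (inv x) = s x
  s_inv : ∀ x, s (inv x) = r x
  inv_mul : ∀ x (h : s (inv x) = r x), mul (inv x) x h = s x
  mul_inv : ∀ x (h : s x = r (inv x)), mul x (inv x) h = r x
  cont_r : Continuous r
  cont_s : Continuous s
  cont_inv : Continuous inv
  cont_mul : Continuous fun p : {p : G × G // s p.1 = r p.2} => mul p.1.1 p.1.2 p.2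

/-- A `(G,H)`-equivalence: a locally compact space `Z` with commuting free and proper
left `G`- and right `H`-actions whose moment maps `ρ` and `σ` are continuous, open,
and induce bijections `Z/H ≅ G⁰` and `G\Z ≅ H⁰`. -/
structure GpdEquiv {G H : Type*} [TopologicalSpace G] [TopologicalSpace H]
    (𝒢 : TopGpd G) (ℋ : TopGpd H) (Z : Type*) [TopologicalSpace Z] where
  ρ : Z → G
  σ : Z → H
  ρ_unit : ∀ z, 𝒢.r (ρ z) = ρ z
  σ_unit : ∀ z, ℋ.r (σ z) = σ z
  ρ_cont : Continuous ρ
  σ_cont : Continuous σ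
  ρ_open : IsOpenMap ρ
  σ_open : IsOpenMap σ
  lact : (γ : G) → (z : Z) → 𝒢.s γ = ρ z → Z
  ract : (z : Z) → (η : H) → σ z = ℋ.r η → Z
  ρ_lact : ∀ γ z h, ρ (lact γ z h) = 𝒢.r γ
  σ_lact : ∀ γ z h, σ (lact γ z h) = σ z
  ρ_ract : ∀ z η h, ρ (ract z η h) = ρ z
  σ_ract : ∀ z η h, σ (ract z η h) = ℋ.s η
  lact_unit : ∀ z (h : 𝒢.s (ρ z) = ρ z), lact (ρ z) z h = z
  ract_unit : ∀ z (h : σ z = ℋ.r (σ z)), ract z (σ z) h = z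
  lact_mul : ∀ γ γ' z (h : 𝒢.s γ = 𝒢.r γ') (h' : 𝒢.s γ' = ρ z)
      (h'' : 𝒢.s (𝒢.mul γ γ' h) = ρ z) (h''' : 𝒢.s γ = ρ (lact γ' z h')),
      lact (𝒢.mul γ γ' h) z h'' = lact γ (lact γ' z h') h'''
  ract_mul : ∀ z η η' (h : σ z = ℋ.r η) (h' : ℋ.s η = ℋ.r η')
      (h'' : σ z = ℋ.r (ℋ.mul η η' h')) (h''' : σ (ract z η h) = ℋ.r η'),
      ract z (ℋ.mul η η' h') h'' = ract (ract z η h) η' h'''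
  act_comm : ∀ γ z η (h₁ : 𝒢.s γ = ρ z) (h₂ : σ z = ℋ.r η)
      (h₃ : σ (lact γ z h₁) = ℋ.r η) (h₄ : 𝒢.s γ = ρ (ract z η h₂)),
      ract (lact γ z h₁) η h₃ = lact γ (ract z η h₂) h₄
  lact_free : ∀ γ z h, lact γ z h = z → γ = ρ z
  ract_free : ∀ z η h, ract z η h = z → η = σ z
  lact_cont : Continuous fun p : {p : G × Z // 𝒢.s p.1 = ρ p.2} =>
      lact p.1.1 p.1.2 p.2
  ract_cont : Continuous fun p : {p : Z × H // σ p.1 = ℋ.r p.2} =>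
      ract p.1.1 p.1.2 p.2
  lact_proper : IsProperMap fun p : {p : G × Z // 𝒢.s p.1 = ρ p.2} =>
      (lact p.1.1 p.1.2 p.2, p.1.2)
  ract_proper : IsProperMap fun p : {p : Z × H // σ p.1 = ℋ.r p.2} =>
      (ract p.1.1 p.1.2 p.2, p.1.1)
  ρ_surj : ∀ u, 𝒢.r u = u → ∃ z, ρ z = u
  σ_surj : ∀ v, ℋ.r v = v → ∃ z, σ z = v
  ρ_orbit : ∀ y z, ρ y = ρ z → ∃ η h, ract z η h = y
  σ_orbit : ∀ y z, σ y = σ z → ∃ γ h, lact γ z h = y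

/-- Inclusion of `G` into the linking space `L = G ⊔ Z ⊔ Z^op ⊔ H`. -/
def inG {G Z H : Type*} (γ : G) : G ⊕ Z ⊕ Z ⊕ H := Sum.inl γ

/-- Inclusion of `Z` into the linking space. -/
def inZ {G Z H : Type*} (z : Z) : G ⊕ Z ⊕ Z ⊕ H := Sum.inr (Sum.inl z)

/-- Inclusion of `Z^op` (a second copy of `Z`, `z ↦ z̄`) into the linking space. -/
def inZo {G Z H : Type*} (z : Z) : G ⊕ Z ⊕ Z ⊕ H := Sum.inr (Sum.inr (Sum.inl z))

/-- Inclusion of `H` into the linking space. -/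
def inH {G Z H : Type*} (η : H) : G ⊕ Z ⊕ Z ⊕ H := Sum.inr (Sum.inr (Sum.inr η))

namespace TopGpd

variable {K : Type*} [TopologicalSpace K] (𝒦 : TopGpd K)

theorem mul_congr {x x' y y' : K} (hx : x = x') (hy : y = y')
    (h : 𝒦.s x = 𝒦.r y) (h' : 𝒦.s x' = 𝒦.r y') : 𝒦.mul x y h = 𝒦.mul x' y' h' := by
  subst hx; subst hy; rfl

theorem inv_unit {x : K} (h : 𝒦.r x = x) : 𝒦.inv x = x := by
  have hs : 𝒦.s x = x := by rw [← h]; exact 𝒦.s_r x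
  have h1 : 𝒦.s (𝒦.inv x) = x := (𝒦.s_inv x).trans h
  calc 𝒦.inv x = 𝒦.mul (𝒦.inv x) (𝒦.s (𝒦.inv x)) (𝒦.r_s _).symm := (𝒦.mul_unit _ _).symm
    _ = 𝒦.mul (𝒦.inv x) x (h1.trans h.symm) := 𝒦.mul_congr rfl h1 _ _
    _ = 𝒦.s x := 𝒦.inv_mul x _
    _ = x := hs

theorem inv_inv (x : K) : 𝒦.inv (𝒦.inv x) = x := by
  have p1 : 𝒦.s (𝒦.inv (𝒦.inv x)) = 𝒦.r (𝒦.inv x) := 𝒦.s_inv _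
  have p3 : 𝒦.s (𝒦.inv x) = 𝒦.r x := 𝒦.s_inv x
  have e1 : 𝒦.mul (𝒦.inv (𝒦.inv x)) (𝒦.inv x) p1 = 𝒦.r x :=
    (𝒦.inv_mul (𝒦.inv x) p1).trans p3
  have e2 : 𝒦.mul (𝒦.inv x) x p3 = 𝒦.s (𝒦.inv (𝒦.inv x)) :=
    (𝒦.inv_mul x p3).trans ((𝒦.s_inv (𝒦.inv x)).trans (𝒦.r_inv x)).symm
  have p2 : 𝒦.s (𝒦.mul (𝒦.inv (𝒦.inv x)) (𝒦.inv x) p1) = 𝒦.r x := by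
    rw [𝒦.s_mul]; exact p3
  have p4 : 𝒦.s (𝒦.inv (𝒦.inv x)) = 𝒦.r (𝒦.mul (𝒦.inv x) x p3) := by
    rw [𝒦.r_mul]; exact p1
  exact (calc x = 𝒦.mul (𝒦.r x) x (𝒦.s_r x) := (𝒦.unit_mul x _).symm
    _ = 𝒦.mul (𝒦.mul (𝒦.inv (𝒦.inv x)) (𝒦.inv x) p1) x p2 := 𝒦.mul_congr e1.symm rfl _ _
    _ = 𝒦.mul (𝒦.inv (𝒦.inv x)) (𝒦.mul (𝒦.inv x) x p3) p4 := 𝒦.mul_assoc _ _ _ _ _ _ _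
    _ = 𝒦.mul (𝒦.inv (𝒦.inv x)) (𝒦.s (𝒦.inv (𝒦.inv x))) (𝒦.r_s _).symm :=
        𝒦.mul_congr rfl e2 _ _
    _ = 𝒦.inv (𝒦.inv x) := 𝒦.mul_unit _ _).symm

theorem inv_mul_rev (x y : K) (h : 𝒦.s x = 𝒦.r y) (h' : 𝒦.s (𝒦.inv y) = 𝒦.r (𝒦.inv x)) :
    𝒦.inv (𝒦.mul x y h) = 𝒦.mul (𝒦.inv y) (𝒦.inv x) h' := by
  have pB : 𝒦.s (𝒦.mul x y h) = 𝒦.r (𝒦.inv y) := by rw [𝒦.s_mul, 𝒦.r_inv]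
  have pyy : 𝒦.s y = 𝒦.r (𝒦.inv y) := (𝒦.r_inv y).symm
  have eB : 𝒦.mul (𝒦.mul x y h) (𝒦.inv y) pB = x := by
    have p5 : 𝒦.s x = 𝒦.r (𝒦.mul y (𝒦.inv y) pyy) := by rw [𝒦.r_mul]; exact h
    calc 𝒦.mul (𝒦.mul x y h) (𝒦.inv y) pB
        = 𝒦.mul x (𝒦.mul y (𝒦.inv y) pyy) p5 := 𝒦.mul_assoc _ _ _ _ _ _ _
      _ = 𝒦.mul x (𝒦.s x) (𝒦.r_s _).symm :=
          𝒦.mul_congr rfl ((𝒦.mul_inv y pyy).trans h.symm) _ _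
      _ = x := 𝒦.mul_unit x _
  have pq : 𝒦.s (𝒦.mul x y h) = 𝒦.r (𝒦.mul (𝒦.inv y) (𝒦.inv x) h') := by
    rw [𝒦.s_mul, 𝒦.r_mul, 𝒦.r_inv]
  have eC : 𝒦.mul (𝒦.mul x y h) (𝒦.mul (𝒦.inv y) (𝒦.inv x) h') pq = 𝒦.r (𝒦.mul x y h) := by
    have pxx : 𝒦.s x = 𝒦.r (𝒦.inv x) := (𝒦.r_inv x).symm
    have p6 : 𝒦.s (𝒦.mul (𝒦.mul x y h) (𝒦.inv y) pB) = 𝒦.r (𝒦.inv x) := by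
      rw [𝒦.s_mul, 𝒦.s_inv, 𝒦.r_inv]; exact h.symm
    calc 𝒦.mul (𝒦.mul x y h) (𝒦.mul (𝒦.inv y) (𝒦.inv x) h') pq
        = 𝒦.mul (𝒦.mul (𝒦.mul x y h) (𝒦.inv y) pB) (𝒦.inv x) p6 :=
          (𝒦.mul_assoc _ _ _ _ _ _ _).symm
      _ = 𝒦.mul x (𝒦.inv x) pxx := 𝒦.mul_congr eB rfl _ _
      _ = 𝒦.r x := 𝒦.mul_inv x pxx
      _ = 𝒦.r (𝒦.mul x y h) := (𝒦.r_mul x y h).symm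
  have pp : 𝒦.s (𝒦.inv (𝒦.mul x y h)) = 𝒦.r (𝒦.mul x y h) := 𝒦.s_inv _
  have p7 : 𝒦.s (𝒦.inv (𝒦.mul x y h)) =
      𝒦.r (𝒦.mul (𝒦.mul x y h) (𝒦.mul (𝒦.inv y) (𝒦.inv x) h') pq) := by
    rw [𝒦.r_mul]; exact pp
  have p8 : 𝒦.s (𝒦.mul (𝒦.inv (𝒦.mul x y h)) (𝒦.mul x y h) pp) =
      𝒦.r (𝒦.mul (𝒦.inv y) (𝒦.inv x) h') := by
    rw [𝒦.s_mul, 𝒦.s_mul, 𝒦.r_mul, 𝒦.r_inv]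
  calc 𝒦.inv (𝒦.mul x y h)
      = 𝒦.mul (𝒦.inv (𝒦.mul x y h)) (𝒦.s (𝒦.inv (𝒦.mul x y h))) (𝒦.r_s _).symm :=
        (𝒦.mul_unit _ _).symm
    _ = 𝒦.mul (𝒦.inv (𝒦.mul x y h))
          (𝒦.mul (𝒦.mul x y h) (𝒦.mul (𝒦.inv y) (𝒦.inv x) h') pq) p7 :=
        𝒦.mul_congr rfl (pp.trans eC.symm) _ _
    _ = 𝒦.mul (𝒦.mul (𝒦.inv (𝒦.mul x y h)) (𝒦.mul x y h) pp)
          (𝒦.mul (𝒦.inv y) (𝒦.inv x) h') p8 := (𝒦.mul_assoc _ _ _ _ _ _ _).symm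
    _ = 𝒦.mul (𝒦.r (𝒦.mul (𝒦.inv y) (𝒦.inv x) h')) (𝒦.mul (𝒦.inv y) (𝒦.inv x) h')
          (𝒦.s_r _) :=
        𝒦.mul_congr ((𝒦.inv_mul _ pp).trans (by rw [𝒦.s_mul, 𝒦.r_mul, 𝒦.r_inv])) rfl _ _
    _ = 𝒦.mul (𝒦.inv y) (𝒦.inv x) h' := 𝒦.unit_mul _ _

end TopGpd
namespace GpdEquiv

variable {G H Z : Type*} [TopologicalSpace G] [TopologicalSpace H] [TopologicalSpace Z]
variable {𝒢 : TopGpd G} {ℋ : TopGpd H} (E : GpdEquiv 𝒢 ℋ Z)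

theorem lact_congr {γ γ' : G} {z z' : Z} (h1 : γ = γ') (h2 : z = z')
    (p : 𝒢.s γ = E.ρ z) (p' : 𝒢.s γ' = E.ρ z') : E.lact γ z p = E.lact γ' z' p' := by
  subst h1; subst h2; rfl

theorem ract_congr {z z' : Z} {η η' : H} (h1 : z = z') (h2 : η = η')
    (p : E.σ z = ℋ.r η) (p' : E.σ z' = ℋ.r η') : E.ract z η p = E.ract z' η' p' := by
  subst h1; subst h2; rfl

theorem s_ρ (z : Z) : 𝒢.s (E.ρ z) = E.ρ z := by rw [← E.ρ_unit z, 𝒢.s_r]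

theorem s_σ (z : Z) : ℋ.s (E.σ z) = E.σ z := by rw [← E.σ_unit z, ℋ.s_r]

theorem lact_inv_lact (γ : G) (z : Z) (p : 𝒢.s γ = E.ρ z)
    (p2 : 𝒢.s (𝒢.inv γ) = E.ρ (E.lact γ z p)) :
    E.lact (𝒢.inv γ) (E.lact γ z p) p2 = z := by
  have pc : 𝒢.s (𝒢.inv γ) = 𝒢.r γ := 𝒢.s_inv γ
  have pm : 𝒢.s (𝒢.mul (𝒢.inv γ) γ pc) = E.ρ z := by rw [𝒢.s_mul]; exact p
  calc E.lact (𝒢.inv γ) (E.lact γ z p) p2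
      = E.lact (𝒢.mul (𝒢.inv γ) γ pc) z pm := (E.lact_mul _ _ _ _ _ _ _).symm
    _ = E.lact (E.ρ z) z (E.s_ρ z) := E.lact_congr ((𝒢.inv_mul γ pc).trans p) rfl _ _
    _ = z := E.lact_unit z _

theorem lact_lact_inv (γ : G) (z : Z) (p : 𝒢.s (𝒢.inv γ) = E.ρ z)
    (p2 : 𝒢.s γ = E.ρ (E.lact (𝒢.inv γ) z p)) :
    E.lact γ (E.lact (𝒢.inv γ) z p) p2 = z := by
  have h1 : 𝒢.s (𝒢.inv (𝒢.inv γ)) = E.ρ (E.lact (𝒢.inv γ) z p) := by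
    rw [𝒢.inv_inv]; exact p2
  calc E.lact γ (E.lact (𝒢.inv γ) z p) p2
      = E.lact (𝒢.inv (𝒢.inv γ)) (E.lact (𝒢.inv γ) z p) h1 :=
        E.lact_congr (𝒢.inv_inv γ).symm rfl _ _
    _ = z := E.lact_inv_lact _ _ _ _

theorem ract_inv_ract (z : Z) (η : H) (p : E.σ z = ℋ.r η)
    (p2 : E.σ (E.ract z η p) = ℋ.r (ℋ.inv η)) :
    E.ract (E.ract z η p) (ℋ.inv η) p2 = z := by
  have pc : ℋ.s η = ℋ.r (ℋ.inv η) := (ℋ.r_inv η).symm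
  have pm : E.σ z = ℋ.r (ℋ.mul η (ℋ.inv η) pc) := by rw [ℋ.r_mul]; exact p
  calc E.ract (E.ract z η p) (ℋ.inv η) p2
      = E.ract z (ℋ.mul η (ℋ.inv η) pc) pm := (E.ract_mul _ _ _ _ _ _ _).symm
    _ = E.ract z (E.σ z) (E.σ_unit z).symm :=
        E.ract_congr rfl ((ℋ.mul_inv η pc).trans p.symm) _ _
    _ = z := E.ract_unit z _

theorem ract_ract_inv (z : Z) (η : H) (p : E.σ z = ℋ.r (ℋ.inv η))
    (p2 : E.σ (E.ract z (ℋ.inv η) p) = ℋ.r η) :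
    E.ract (E.ract z (ℋ.inv η) p) η p2 = z := by
  have h1 : E.σ (E.ract z (ℋ.inv η) p) = ℋ.r (ℋ.inv (ℋ.inv η)) := by
    rw [ℋ.inv_inv]; exact p2
  calc E.ract (E.ract z (ℋ.inv η) p) η p2
      = E.ract (E.ract z (ℋ.inv η) p) (ℋ.inv (ℋ.inv η)) h1 :=
        E.ract_congr rfl (ℋ.inv_inv η).symm _ _
    _ = z := E.ract_inv_ract _ _ _ _

theorem lact_inj {γ : G} {y z : Z} (p : 𝒢.s γ = E.ρ y) (p' : 𝒢.s γ = E.ρ z)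
    (he : E.lact γ y p = E.lact γ z p') : y = z := by
  have pr : 𝒢.s (𝒢.inv γ) = E.ρ (E.lact γ y p) := by rw [𝒢.s_inv, E.ρ_lact]
  have pr' : 𝒢.s (𝒢.inv γ) = E.ρ (E.lact γ z p') := by rw [𝒢.s_inv, E.ρ_lact]
  calc y = E.lact (𝒢.inv γ) (E.lact γ y p) pr := (E.lact_inv_lact _ _ _ _).symm
    _ = E.lact (𝒢.inv γ) (E.lact γ z p') pr' := E.lact_congr rfl he _ _
    _ = z := E.lact_inv_lact _ _ _ _

theorem ract_inj {η : H} {y z : Z} (p : E.σ y = ℋ.r η) (p' : E.σ z = ℋ.r η)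
    (he : E.ract y η p = E.ract z η p') : y = z := by
  have pr : E.σ (E.ract y η p) = ℋ.r (ℋ.inv η) := by rw [E.σ_ract, ℋ.r_inv]
  have pr' : E.σ (E.ract z η p') = ℋ.r (ℋ.inv η) := by rw [E.σ_ract, ℋ.r_inv]
  calc y = E.ract (E.ract y η p) (ℋ.inv η) pr := (E.ract_inv_ract _ _ _ _).symm
    _ = E.ract (E.ract z η p') (ℋ.inv η) pr' := E.ract_congr he rfl _ _
    _ = z := E.ract_inv_ract _ _ _ _

theorem lact_cancel {γ γ' : G} {z : Z} (p : 𝒢.s γ = E.ρ z) (p' : 𝒢.s γ' = E.ρ z)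
    (he : E.lact γ z p = E.lact γ' z p') : γ = γ' := by
  have hr : 𝒢.r γ = 𝒢.r γ' := by rw [← E.ρ_lact γ z p, ← E.ρ_lact γ' z p', he]
  have pc : 𝒢.s (𝒢.inv γ') = 𝒢.r γ := (𝒢.s_inv γ').trans hr.symm
  have pcz : 𝒢.s (𝒢.mul (𝒢.inv γ') γ pc) = E.ρ z := by rw [𝒢.s_mul]; exact p
  have pil : 𝒢.s (𝒢.inv γ') = E.ρ (E.lact γ z p) := by
    rw [𝒢.s_inv, E.ρ_lact]; exact hr.symm
  have pil' : 𝒢.s (𝒢.inv γ') = E.ρ (E.lact γ' z p') := by rw [𝒢.s_inv, E.ρ_lact]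
  have h1 : E.lact (𝒢.mul (𝒢.inv γ') γ pc) z pcz = z := by
    calc E.lact (𝒢.mul (𝒢.inv γ') γ pc) z pcz
        = E.lact (𝒢.inv γ') (E.lact γ z p) pil := E.lact_mul _ _ _ _ _ _ _
      _ = E.lact (𝒢.inv γ') (E.lact γ' z p') pil' := E.lact_congr rfl he _ _
      _ = z := E.lact_inv_lact _ _ _ _
  have h2 : 𝒢.mul (𝒢.inv γ') γ pc = E.ρ z := E.lact_free _ z pcz h1
  have pγc : 𝒢.s γ' = 𝒢.r (𝒢.mul (𝒢.inv γ') γ pc) := by rw [𝒢.r_mul, 𝒢.r_inv]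
  have h3 : 𝒢.mul γ' (𝒢.mul (𝒢.inv γ') γ pc) pγc = γ := by
    have pa : 𝒢.s γ' = 𝒢.r (𝒢.inv γ') := (𝒢.r_inv γ').symm
    have pb : 𝒢.s (𝒢.mul γ' (𝒢.inv γ') pa) = 𝒢.r γ := by
      rw [𝒢.s_mul, 𝒢.s_inv]; exact hr.symm
    calc 𝒢.mul γ' (𝒢.mul (𝒢.inv γ') γ pc) pγc
        = 𝒢.mul (𝒢.mul γ' (𝒢.inv γ') pa) γ pb := (𝒢.mul_assoc _ _ _ _ _ _ _).symm
      _ = 𝒢.mul (𝒢.r γ) γ (𝒢.s_r γ) := 𝒢.mul_congr ((𝒢.mul_inv γ' pa).trans hr.symm) rfl _ _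
      _ = γ := 𝒢.unit_mul γ _
  have h4 : 𝒢.mul γ' (𝒢.mul (𝒢.inv γ') γ pc) pγc = γ' := by
    calc 𝒢.mul γ' (𝒢.mul (𝒢.inv γ') γ pc) pγc
        = 𝒢.mul γ' (𝒢.s γ') (𝒢.r_s γ').symm := 𝒢.mul_congr rfl (h2.trans p'.symm) _ _
      _ = γ' := 𝒢.mul_unit γ' _
  exact h3.symm.trans h4

theorem ract_cancel {η η' : H} {z : Z} (p : E.σ z = ℋ.r η) (p' : E.σ z = ℋ.r η')
    (he : E.ract z η p = E.ract z η' p') : η = η' := by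
  have hs : ℋ.s η = ℋ.s η' := by rw [← E.σ_ract z η p, ← E.σ_ract z η' p', he]
  have pc : ℋ.s η = ℋ.r (ℋ.inv η') := hs.trans (ℋ.r_inv η').symm
  have pzc : E.σ z = ℋ.r (ℋ.mul η (ℋ.inv η') pc) := by rw [ℋ.r_mul]; exact p
  have q1 : E.σ (E.ract z η p) = ℋ.r (ℋ.inv η') := by rw [E.σ_ract]; exact pc
  have q2 : E.σ (E.ract z η' p') = ℋ.r (ℋ.inv η') := by
    rw [E.σ_ract]; exact (ℋ.r_inv η').symm
  have h1 : E.ract z (ℋ.mul η (ℋ.inv η') pc) pzc = z := by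
    calc E.ract z (ℋ.mul η (ℋ.inv η') pc) pzc
        = E.ract (E.ract z η p) (ℋ.inv η') q1 := E.ract_mul _ _ _ _ _ _ _
      _ = E.ract (E.ract z η' p') (ℋ.inv η') q2 := E.ract_congr he rfl _ _
      _ = z := E.ract_inv_ract _ _ _ _
  have h2 : ℋ.mul η (ℋ.inv η') pc = E.σ z := E.ract_free z _ pzc h1
  have pηc : ℋ.s (ℋ.mul η (ℋ.inv η') pc) = ℋ.r η' := by rw [ℋ.s_mul, ℋ.s_inv]
  have h3 : ℋ.mul (ℋ.mul η (ℋ.inv η') pc) η' pηc = η := by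
    have pa : ℋ.s (ℋ.inv η') = ℋ.r η' := ℋ.s_inv η'
    have pb : ℋ.s η = ℋ.r (ℋ.mul (ℋ.inv η') η' pa) := by
      rw [ℋ.r_mul, ℋ.r_inv]; exact hs
    calc ℋ.mul (ℋ.mul η (ℋ.inv η') pc) η' pηc
        = ℋ.mul η (ℋ.mul (ℋ.inv η') η' pa) pb := ℋ.mul_assoc _ _ _ _ _ _ _
      _ = ℋ.mul η (ℋ.s η) (ℋ.r_s η).symm :=
          ℋ.mul_congr rfl ((ℋ.inv_mul η' pa).trans hs.symm) _ _
      _ = η := ℋ.mul_unit η _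
  have h4 : ℋ.mul (ℋ.mul η (ℋ.inv η') pc) η' pηc = η' := by
    calc ℋ.mul (ℋ.mul η (ℋ.inv η') pc) η' pηc
        = ℋ.mul (ℋ.r η') η' (ℋ.s_r η') := ℋ.mul_congr (h2.trans p') rfl _ _
      _ = η' := ℋ.unit_mul η' _
  exact h3.symm.trans h4

end GpdEquiv
section Linking

variable {G H Z : Type*} [TopologicalSpace G] [TopologicalSpace H] [TopologicalSpace Z]
variable {𝒢 : TopGpd G} {ℋ : TopGpd H}

/-- Range map of the linking groupoid. -/
def Lr (E : GpdEquiv 𝒢 ℋ Z) : G ⊕ Z ⊕ Z ⊕ H → G ⊕ Z ⊕ Z ⊕ H :=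
  Sum.elim (fun γ => inG (𝒢.r γ)) (Sum.elim (fun z => inG (E.ρ z))
    (Sum.elim (fun z => inH (E.σ z)) (fun η => inH (ℋ.r η))))

/-- Source map of the linking groupoid. -/
def Ls (E : GpdEquiv 𝒢 ℋ Z) : G ⊕ Z ⊕ Z ⊕ H → G ⊕ Z ⊕ Z ⊕ H :=
  Sum.elim (fun γ => inG (𝒢.s γ)) (Sum.elim (fun z => inH (E.σ z))
    (Sum.elim (fun z => inG (E.ρ z)) (fun η => inH (ℋ.s η))))

/-- Inversion of the linking groupoid. -/
def Linv (E : GpdEquiv 𝒢 ℋ Z) : G ⊕ Z ⊕ Z ⊕ H → G ⊕ Z ⊕ Z ⊕ H :=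
  Sum.elim (fun γ => inG (𝒢.inv γ)) (Sum.elim (fun z => inZo z)
    (Sum.elim (fun z => inZ z) (fun η => inH (ℋ.inv η))))

/-- Multiplication of the linking groupoid. -/
def Lmul (E : GpdEquiv 𝒢 ℋ Z) (gbr : (y z : Z) → E.σ y = E.σ z → G)
    (hbr : (y z : Z) → E.ρ y = E.ρ z → H) :
    (x y : G ⊕ Z ⊕ Z ⊕ H) → Ls E x = Lr E y → G ⊕ Z ⊕ Z ⊕ H
  | .inl γ, .inl γ', h => inG (𝒢.mul γ γ' (Sum.inl.inj h))
  | .inl γ, .inr (.inl z), h => inZ (E.lact γ z (Sum.inl.inj h))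
  | .inl _, .inr (.inr (.inl _)), h => absurd h (by simp [Ls, Lr, inG, inH])
  | .inl _, .inr (.inr (.inr _)), h => absurd h (by simp [Ls, Lr, inG, inH])
  | .inr (.inl _), .inl _, h => absurd h (by simp [Ls, Lr, inG, inH])
  | .inr (.inl _), .inr (.inl _), h => absurd h (by simp [Ls, Lr, inG, inH])
  | .inr (.inl y), .inr (.inr (.inl z)), h =>
      inG (gbr y z (Sum.inr.inj (Sum.inr.inj (Sum.inr.inj h))))
  | .inr (.inl z), .inr (.inr (.inr η)), h =>
      inZ (E.ract z η (Sum.inr.inj (Sum.inr.inj (Sum.inr.inj h))))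
  | .inr (.inr (.inl z)), .inl γ, h =>
      inZo (E.lact (𝒢.inv γ) z ((𝒢.s_inv γ).trans (Sum.inl.inj h).symm))
  | .inr (.inr (.inl y)), .inr (.inl z), h => inH (hbr y z (Sum.inl.inj h))
  | .inr (.inr (.inl _)), .inr (.inr (.inl _)), h => absurd h (by simp [Ls, Lr, inG, inH])
  | .inr (.inr (.inl _)), .inr (.inr (.inr _)), h => absurd h (by simp [Ls, Lr, inG, inH])
  | .inr (.inr (.inr _)), .inl _, h => absurd h (by simp [Ls, Lr, inG, inH])
  | .inr (.inr (.inr _)), .inr (.inl _), h => absurd h (by simp [Ls, Lr, inG, inH])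
  | .inr (.inr (.inr η)), .inr (.inr (.inl z)), h =>
      inZo (E.ract z (ℋ.inv η)
        ((Sum.inr.inj (Sum.inr.inj (Sum.inr.inj h))).symm.trans (ℋ.r_inv η).symm))
  | .inr (.inr (.inr η)), .inr (.inr (.inr η')), h =>
      inH (ℋ.mul η η' (Sum.inr.inj (Sum.inr.inj (Sum.inr.inj h))))

variable {E : GpdEquiv 𝒢 ℋ Z}
variable {gbr : (y z : Z) → E.σ y = E.σ z → G} {hbr : (y z : Z) → E.ρ y = E.ρ z → H}

theorem gbr_eq (hgbr : ∀ y z (h : E.σ y = E.σ z), ∃ hc : 𝒢.s (gbr y z h) = E.ρ z,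
      𝒢.r (gbr y z h) = E.ρ y ∧ E.lact (gbr y z h) z hc = y)
    {γ : G} {y z : Z} {p : 𝒢.s γ = E.ρ z} (q : E.σ y = E.σ z)
    (heq : E.lact γ z p = y) : gbr y z q = γ := by
  obtain ⟨hc, -, ha⟩ := hgbr y z q
  exact E.lact_cancel hc p (ha.trans heq.symm)

theorem hbr_eq (hhbr : ∀ y z (h : E.ρ y = E.ρ z), ∃ hc : E.σ y = ℋ.r (hbr y z h),
      ℋ.s (hbr y z h) = E.σ z ∧ E.ract y (hbr y z h) hc = z)
    {η : H} {y z : Z} {p : E.σ y = ℋ.r η} (q : E.ρ y = E.ρ z)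
    (heq : E.ract y η p = z) : hbr y z q = η := by
  obtain ⟨hc, -, ha⟩ := hhbr y z q
  exact E.ract_cancel hc p (ha.trans heq.symm)

end Linking
section AssocLemmas

variable {G H Z : Type*} [TopologicalSpace G] [TopologicalSpace H] [TopologicalSpace Z]
variable {𝒢 : TopGpd G} {ℋ : TopGpd H} {E : GpdEquiv 𝒢 ℋ Z}
variable {gbr : (y z : Z) → E.σ y = E.σ z → G} {hbr : (y z : Z) → E.ρ y = E.ρ z → H}

/-- `(γ·y)·z̄ = γ·(y·z̄)`, i.e. `[γy, z] = γ·[y,z]`. -/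
theorem gbr_lact (hgbr : ∀ y z (h : E.σ y = E.σ z), ∃ hc : 𝒢.s (gbr y z h) = E.ρ z,
      𝒢.r (gbr y z h) = E.ρ y ∧ E.lact (gbr y z h) z hc = y)
    (γ : G) (y z : Z) (p : 𝒢.s γ = E.ρ y) (pc : E.σ y = E.σ z)
    (pd : 𝒢.s γ = 𝒢.r (gbr y z pc)) (q : E.σ (E.lact γ y p) = E.σ z) :
    gbr (E.lact γ y p) z q = 𝒢.mul γ (gbr y z pc) pd := by
  obtain ⟨hc, hr, ha⟩ := hgbr y z pc
  have pm : 𝒢.s (𝒢.mul γ (gbr y z pc) pd) = E.ρ z := by rw [𝒢.s_mul]; exact hc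
  have pg : 𝒢.s γ = E.ρ (E.lact (gbr y z pc) z hc) := by rw [E.ρ_lact]; exact pd
  refine gbr_eq (p := pm) hgbr q ?_
  calc E.lact (𝒢.mul γ (gbr y z pc) pd) z pm
      = E.lact γ (E.lact (gbr y z pc) z hc) pg := E.lact_mul _ _ _ _ _ _ _
    _ = E.lact γ y p := E.lact_congr rfl ha _ _

/-- `y·(z̄·γ) = (y·z̄)·γ`. -/
theorem gbr_lact_inv (hgbr : ∀ y z (h : E.σ y = E.σ z), ∃ hc : 𝒢.s (gbr y z h) = E.ρ z,
      𝒢.r (gbr y z h) = E.ρ y ∧ E.lact (gbr y z h) z hc = y)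
    (y z : Z) (γ : G) (pc : E.σ y = E.σ z) (p : 𝒢.s (𝒢.inv γ) = E.ρ z)
    (pd : 𝒢.s (gbr y z pc) = 𝒢.r γ) (q : E.σ y = E.σ (E.lact (𝒢.inv γ) z p)) :
    gbr y (E.lact (𝒢.inv γ) z p) q = 𝒢.mul (gbr y z pc) γ pd := by
  obtain ⟨hc, hr, ha⟩ := hgbr y z pc
  have pm : 𝒢.s (𝒢.mul (gbr y z pc) γ pd) = E.ρ (E.lact (𝒢.inv γ) z p) := by
    rw [𝒢.s_mul, E.ρ_lact, 𝒢.r_inv]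
  have pγ : 𝒢.s γ = E.ρ (E.lact (𝒢.inv γ) z p) := by rw [E.ρ_lact, 𝒢.r_inv]
  have pg : 𝒢.s (gbr y z pc) = E.ρ (E.lact γ (E.lact (𝒢.inv γ) z p) pγ) := by
    rw [E.ρ_lact]; exact pd
  refine gbr_eq (p := pm) hgbr q ?_
  calc E.lact (𝒢.mul (gbr y z pc) γ pd) (E.lact (𝒢.inv γ) z p) pm
      = E.lact (gbr y z pc) (E.lact γ (E.lact (𝒢.inv γ) z p) pγ) pg := E.lact_mul _ _ _ _ _ _ _
    _ = E.lact (gbr y z pc) z hc := E.lact_congr rfl (E.lact_lact_inv _ _ _ _) _ _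
    _ = y := ha

/-- `(y·z̄)·w = y·(z̄·w)`. -/
theorem gbr_hbr_mid
    (hgbr : ∀ y z (h : E.σ y = E.σ z), ∃ hc : 𝒢.s (gbr y z h) = E.ρ z,
      𝒢.r (gbr y z h) = E.ρ y ∧ E.lact (gbr y z h) z hc = y)
    (hhbr : ∀ y z (h : E.ρ y = E.ρ z), ∃ hc : E.σ y = ℋ.r (hbr y z h),
      ℋ.s (hbr y z h) = E.σ z ∧ E.ract y (hbr y z h) hc = z)
    (y z w : Z) (pc : E.σ y = E.σ z) (qc : E.ρ z = E.ρ w)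
    (pd : 𝒢.s (gbr y z pc) = E.ρ w) (q : E.σ y = ℋ.r (hbr z w qc)) :
    E.lact (gbr y z pc) w pd = E.ract y (hbr z w qc) q := by
  obtain ⟨hc, hr, ha⟩ := hgbr y z pc
  obtain ⟨kc, ks, ka⟩ := hhbr z w qc
  have q2 : E.σ (E.lact (gbr y z pc) z hc) = ℋ.r (hbr z w qc) := by
    rw [E.σ_lact]; exact kc
  have q3 : 𝒢.s (gbr y z pc) = E.ρ (E.ract z (hbr z w qc) kc) := by
    rw [E.ρ_ract]; exact hc
  calc E.lact (gbr y z pc) w pd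
      = E.lact (gbr y z pc) (E.ract z (hbr z w qc) kc) q3 := E.lact_congr rfl ka.symm _ _
    _ = E.ract (E.lact (gbr y z pc) z hc) (hbr z w qc) q2 := (E.act_comm _ _ _ _ _ _ _).symm
    _ = E.ract y (hbr z w qc) q := E.ract_congr ha rfl _ _

/-- `(z·η)·w̄ = z·(η·w̄)`. -/
theorem gbr_ract (hgbr : ∀ y z (h : E.σ y = E.σ z), ∃ hc : 𝒢.s (gbr y z h) = E.ρ z,
      𝒢.r (gbr y z h) = E.ρ y ∧ E.lact (gbr y z h) z hc = y)
    (z w : Z) (η : H) (p : E.σ z = ℋ.r η) (p' : E.σ w = ℋ.r (ℋ.inv η))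
    (q : E.σ (E.ract z η p) = E.σ w) (q' : E.σ z = E.σ (E.ract w (ℋ.inv η) p')) :
    gbr (E.ract z η p) w q = gbr z (E.ract w (ℋ.inv η) p') q' := by
  obtain ⟨hc, hr, ha⟩ := hgbr z (E.ract w (ℋ.inv η) p') q'
  have pm : 𝒢.s (gbr z (E.ract w (ℋ.inv η) p') q') = E.ρ w := hc.trans (E.ρ_ract _ _ _)
  have p2 : E.σ (E.ract w (ℋ.inv η) p') = ℋ.r η := by rw [E.σ_ract, ℋ.s_inv]
  have p3 : 𝒢.s (gbr z (E.ract w (ℋ.inv η) p') q') =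
      E.ρ (E.ract (E.ract w (ℋ.inv η) p') η p2) := by rw [E.ρ_ract]; exact hc
  have q4 : E.σ (E.lact (gbr z (E.ract w (ℋ.inv η) p') q') (E.ract w (ℋ.inv η) p') hc) =
      ℋ.r η := by rw [E.σ_lact]; exact p2
  refine gbr_eq (p := pm) hgbr q ?_
  calc E.lact (gbr z (E.ract w (ℋ.inv η) p') q') w pm
      = E.lact (gbr z (E.ract w (ℋ.inv η) p') q')
          (E.ract (E.ract w (ℋ.inv η) p') η p2) p3 :=
        E.lact_congr rfl (E.ract_ract_inv w η p' p2).symm _ _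
    _ = E.ract (E.lact (gbr z (E.ract w (ℋ.inv η) p') q') (E.ract w (ℋ.inv η) p') hc)
          η q4 := (E.act_comm _ _ _ _ _ _ _).symm
    _ = E.ract z η p := E.ract_congr ha rfl _ _

/-- `(z̄·γ)·γ' = z̄·(γ·γ')`. -/
theorem lact_inv_inv (γ γ' : G) (z : Z) (pc : 𝒢.s γ = 𝒢.r γ')
    (p : 𝒢.s (𝒢.inv γ) = E.ρ z) (q : 𝒢.s (𝒢.inv γ') = E.ρ (E.lact (𝒢.inv γ) z p))
    (p' : 𝒢.s (𝒢.inv (𝒢.mul γ γ' pc)) = E.ρ z) :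
    E.lact (𝒢.inv γ') (E.lact (𝒢.inv γ) z p) q = E.lact (𝒢.inv (𝒢.mul γ γ' pc)) z p' := by
  have hi : 𝒢.s (𝒢.inv γ') = 𝒢.r (𝒢.inv γ) := by rw [𝒢.s_inv, 𝒢.r_inv]; exact pc.symm
  have pm : 𝒢.s (𝒢.mul (𝒢.inv γ') (𝒢.inv γ) hi) = E.ρ z := by rw [𝒢.s_mul]; exact p
  calc E.lact (𝒢.inv γ') (E.lact (𝒢.inv γ) z p) q
      = E.lact (𝒢.mul (𝒢.inv γ') (𝒢.inv γ) hi) z pm := (E.lact_mul _ _ _ _ _ _ _).symm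
    _ = E.lact (𝒢.inv (𝒢.mul γ γ' pc)) z p' :=
        E.lact_congr (𝒢.inv_mul_rev γ γ' pc hi).symm rfl _ _

/-- `(z̄·γ)·w = z̄·(γ·w)`. -/
theorem hbr_lact (hhbr : ∀ y z (h : E.ρ y = E.ρ z), ∃ hc : E.σ y = ℋ.r (hbr y z h),
      ℋ.s (hbr y z h) = E.σ z ∧ E.ract y (hbr y z h) hc = z)
    (γ : G) (z w : Z) (p : 𝒢.s (𝒢.inv γ) = E.ρ z) (p' : 𝒢.s γ = E.ρ w)
    (q : E.ρ (E.lact (𝒢.inv γ) z p) = E.ρ w) (q' : E.ρ z = E.ρ (E.lact γ w p')) :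
    hbr (E.lact (𝒢.inv γ) z p) w q = hbr z (E.lact γ w p') q' := by
  obtain ⟨kc, ks, ka⟩ := hhbr z (E.lact γ w p') q'
  have P : E.σ (E.lact (𝒢.inv γ) z p) = ℋ.r (hbr z (E.lact γ w p') q') := by
    rw [E.σ_lact]; exact kc
  have P2 : 𝒢.s (𝒢.inv γ) = E.ρ (E.ract z (hbr z (E.lact γ w p') q') kc) := by
    rw [E.ρ_ract]; exact p
  have P3 : 𝒢.s (𝒢.inv γ) = E.ρ (E.lact γ w p') :=
    (𝒢.s_inv γ).trans (E.ρ_lact γ w p').symm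
  refine hbr_eq (p := P) hhbr q ?_
  calc E.ract (E.lact (𝒢.inv γ) z p) (hbr z (E.lact γ w p') q') P
      = E.lact (𝒢.inv γ) (E.ract z (hbr z (E.lact γ w p') q') kc) P2 :=
        E.act_comm _ _ _ _ _ _ _
    _ = E.lact (𝒢.inv γ) (E.lact γ w p') P3 := E.lact_congr rfl ka _ _
    _ = w := E.lact_inv_lact _ _ _ _

/-- `(ȳ·z)·w̄ = ȳ·(z·w̄)`. -/
theorem ract_inv_eq_lact_inv
    (hgbr : ∀ y z (h : E.σ y = E.σ z), ∃ hc : 𝒢.s (gbr y z h) = E.ρ z,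
      𝒢.r (gbr y z h) = E.ρ y ∧ E.lact (gbr y z h) z hc = y)
    (hhbr : ∀ y z (h : E.ρ y = E.ρ z), ∃ hc : E.σ y = ℋ.r (hbr y z h),
      ℋ.s (hbr y z h) = E.σ z ∧ E.ract y (hbr y z h) hc = z)
    (y z w : Z) (pc : E.ρ y = E.ρ z) (qc : E.σ z = E.σ w)
    (P : E.σ w = ℋ.r (ℋ.inv (hbr y z pc))) (Q : 𝒢.s (𝒢.inv (gbr z w qc)) = E.ρ y) :
    E.ract w (ℋ.inv (hbr y z pc)) P = E.lact (𝒢.inv (gbr z w qc)) y Q := by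
  obtain ⟨kc, ks, ka⟩ := hhbr y z pc
  obtain ⟨hc, hr, ha⟩ := hgbr z w qc
  have p1 : 𝒢.s (gbr z w qc) = E.ρ (E.ract w (ℋ.inv (hbr y z pc)) P) := by
    rw [E.ρ_ract]; exact hc
  have p2 : 𝒢.s (gbr z w qc) = E.ρ (E.lact (𝒢.inv (gbr z w qc)) y Q) := by
    rw [E.ρ_lact, 𝒢.r_inv]
  refine E.lact_inj p1 p2 ?_
  have pr : E.σ (E.lact (gbr z w qc) w hc) = ℋ.r (ℋ.inv (hbr y z pc)) := by
    rw [E.σ_lact]; exact P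
  have pz : E.σ z = ℋ.r (ℋ.inv (hbr y z pc)) := qc.trans P
  have e1 : E.lact (gbr z w qc) (E.ract w (ℋ.inv (hbr y z pc)) P) p1 = y := by
    calc E.lact (gbr z w qc) (E.ract w (ℋ.inv (hbr y z pc)) P) p1
        = E.ract (E.lact (gbr z w qc) w hc) (ℋ.inv (hbr y z pc)) pr :=
          (E.act_comm _ _ _ _ _ _ _).symm
      _ = E.ract z (ℋ.inv (hbr y z pc)) pz := E.ract_congr ha rfl _ _
      _ = E.ract (E.ract y (hbr y z pc) kc) (ℋ.inv (hbr y z pc))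
            (by rw [E.σ_ract, ℋ.r_inv]) := E.ract_congr ka.symm rfl _ _
      _ = y := E.ract_inv_ract _ _ _ _
  have e2 : E.lact (gbr z w qc) (E.lact (𝒢.inv (gbr z w qc)) y Q) p2 = y :=
    E.lact_lact_inv _ _ _ _
  exact e1.trans e2.symm

/-- `(ȳ·z)·η = ȳ·(z·η)`. -/
theorem hbr_ract (hhbr : ∀ y z (h : E.ρ y = E.ρ z), ∃ hc : E.σ y = ℋ.r (hbr y z h),
      ℋ.s (hbr y z h) = E.σ z ∧ E.ract y (hbr y z h) hc = z)
    (y z : Z) (η : H) (pc : E.ρ y = E.ρ z) (p : E.σ z = ℋ.r η)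
    (pd : ℋ.s (hbr y z pc) = ℋ.r η) (q : E.ρ y = E.ρ (E.ract z η p)) :
    hbr y (E.ract z η p) q = ℋ.mul (hbr y z pc) η pd := by
  obtain ⟨kc, ks, ka⟩ := hhbr y z pc
  have P : E.σ y = ℋ.r (ℋ.mul (hbr y z pc) η pd) := by rw [ℋ.r_mul]; exact kc
  have P2 : E.σ (E.ract y (hbr y z pc) kc) = ℋ.r η := by rw [E.σ_ract]; exact pd
  refine hbr_eq (p := P) hhbr q ?_
  calc E.ract y (ℋ.mul (hbr y z pc) η pd) P
      = E.ract (E.ract y (hbr y z pc) kc) η P2 := E.ract_mul _ _ _ _ _ _ _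
    _ = E.ract z η p := E.ract_congr ka rfl _ _

/-- `(η·z̄)·w = η·(z̄·w)`. -/
theorem hbr_ract_inv (hhbr : ∀ y z (h : E.ρ y = E.ρ z), ∃ hc : E.σ y = ℋ.r (hbr y z h),
      ℋ.s (hbr y z h) = E.σ z ∧ E.ract y (hbr y z h) hc = z)
    (η : H) (z w : Z) (p : E.σ z = ℋ.r (ℋ.inv η)) (pc : E.ρ z = E.ρ w)
    (pd : ℋ.s η = ℋ.r (hbr z w pc)) (q : E.ρ (E.ract z (ℋ.inv η) p) = E.ρ w) :
    hbr (E.ract z (ℋ.inv η) p) w q = ℋ.mul η (hbr z w pc) pd := by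
  obtain ⟨kc, ks, ka⟩ := hhbr z w pc
  have pe : ℋ.s η = E.σ z := (p.trans (ℋ.r_inv η)).symm
  have pi : ℋ.s (ℋ.inv η) = ℋ.r (ℋ.mul η (hbr z w pc) pd) := by rw [ℋ.s_inv, ℋ.r_mul]
  have P : E.σ (E.ract z (ℋ.inv η) p) = ℋ.r (ℋ.mul η (hbr z w pc) pd) := by
    rw [E.σ_ract, ℋ.s_inv, ℋ.r_mul]
  have pz : E.σ z = ℋ.r (ℋ.mul (ℋ.inv η) (ℋ.mul η (hbr z w pc) pd) pi) := by
    rw [ℋ.r_mul]; exact p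
  have emid : ℋ.mul (ℋ.inv η) (ℋ.mul η (hbr z w pc) pd) pi = hbr z w pc := by
    have pa : ℋ.s (ℋ.inv η) = ℋ.r η := ℋ.s_inv η
    have pb : ℋ.s (ℋ.mul (ℋ.inv η) η pa) = ℋ.r (hbr z w pc) := by
      rw [ℋ.s_mul]; exact pe.trans kc
    calc ℋ.mul (ℋ.inv η) (ℋ.mul η (hbr z w pc) pd) pi
        = ℋ.mul (ℋ.mul (ℋ.inv η) η pa) (hbr z w pc) pb := (ℋ.mul_assoc _ _ _ _ _ _ _).symm
      _ = ℋ.mul (ℋ.r (hbr z w pc)) (hbr z w pc) (ℋ.s_r _) :=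
          ℋ.mul_congr ((ℋ.inv_mul η pa).trans (pe.trans kc)) rfl _ _
      _ = hbr z w pc := ℋ.unit_mul _ _
  refine hbr_eq (p := P) hhbr q ?_
  calc E.ract (E.ract z (ℋ.inv η) p) (ℋ.mul η (hbr z w pc) pd) P
      = E.ract z (ℋ.mul (ℋ.inv η) (ℋ.mul η (hbr z w pc) pd) pi) pz :=
        (E.ract_mul _ _ _ _ _ _ _).symm
    _ = E.ract z (hbr z w pc) kc := E.ract_congr rfl emid _ _
    _ = w := ka

/-- `(η·η')·w̄ = η·(η'·w̄)`. -/
theorem ract_inv_mul (η η' : H) (w : Z) (pc : ℋ.s η = ℋ.r η')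
    (P : E.σ w = ℋ.r (ℋ.inv (ℋ.mul η η' pc))) (p : E.σ w = ℋ.r (ℋ.inv η'))
    (q : E.σ (E.ract w (ℋ.inv η') p) = ℋ.r (ℋ.inv η)) :
    E.ract w (ℋ.inv (ℋ.mul η η' pc)) P = E.ract (E.ract w (ℋ.inv η') p) (ℋ.inv η) q := by
  have hi : ℋ.s (ℋ.inv η') = ℋ.r (ℋ.inv η) := by rw [ℋ.s_inv, ℋ.r_inv]; exact pc.symm
  have pm : E.σ w = ℋ.r (ℋ.mul (ℋ.inv η') (ℋ.inv η) hi) := by rw [ℋ.r_mul]; exact p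
  calc E.ract w (ℋ.inv (ℋ.mul η η' pc)) P
      = E.ract w (ℋ.mul (ℋ.inv η') (ℋ.inv η) hi) pm :=
        E.ract_congr rfl (ℋ.inv_mul_rev η η' pc hi) _ _
    _ = E.ract (E.ract w (ℋ.inv η') p) (ℋ.inv η) q := E.ract_mul _ _ _ _ _ _ _

end AssocLemmas
section ContAux

theorem continuousAt_of_comp {X Y W : Type*} [TopologicalSpace X] [TopologicalSpace Y]
    [TopologicalSpace W] {e : X → Y} {f : Y → W} (he : IsOpenEmbedding e)
    (hf : Continuous (f ∘ e)) (x : X) : ContinuousAt f (e x) :=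
  he.continuousAt_iff.mp hf.continuousAt

theorem isOpenEmbedding_pairMap {α β L' : Type*} [TopologicalSpace α] [TopologicalSpace β]
    [TopologicalSpace L'] {iA : α → L'} {iB : β → L'}
    (hA : IsOpenEmbedding iA) (hB : IsOpenEmbedding iB)
    {P : α × β → Prop} {Q : L' × L' → Prop}
    (e : {p : α × β // P p} → {q : L' × L' // Q q})
    (hcomp : ∀ p, (e p).val = (iA p.val.1, iB p.val.2))
    (hsurj : ∀ q : {q : L' × L' // Q q}, q.val.1 ∈ Set.range iA → q.val.2 ∈ Set.range iB →
      q ∈ Set.range e) : IsOpenEmbedding e := by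
  have hve : (Subtype.val ∘ e) = (Prod.map iA iB) ∘ (Subtype.val) := by
    funext p
    rw [Function.comp_apply, hcomp]
    rfl
  have hemb2 : IsEmbedding (Subtype.val ∘ e) := by
    rw [hve]
    exact (hA.isEmbedding.prodMap hB.isEmbedding).comp IsEmbedding.subtypeVal
  have hce : Continuous e := continuous_induced_rng.mpr hemb2.continuous
  have hemb : IsEmbedding e := IsEmbedding.of_comp hce continuous_subtype_val hemb2
  refine ⟨hemb, ?_⟩
  have hr : Set.range e = Subtype.val ⁻¹' ((Set.range iA) ×ˢ (Set.range iB)) := by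
    ext q
    constructor
    · rintro ⟨p, rfl⟩
      rw [Set.mem_preimage, hcomp]
      exact ⟨⟨_, rfl⟩, ⟨_, rfl⟩⟩
    · intro hq
      exact hsurj q hq.1 hq.2
  rw [hr]
  exact (hA.isOpen_range.prod hB.isOpen_range).preimage continuous_subtype_val

variable {G H Z : Type*} [TopologicalSpace G] [TopologicalSpace H] [TopologicalSpace Z]
variable {𝒢 : TopGpd G} {ℋ : TopGpd H} {E : GpdEquiv 𝒢 ℋ Z}
variable {gbr : (y z : Z) → E.σ y = E.σ z → G} {hbr : (y z : Z) → E.ρ y = E.ρ z → H}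

theorem gbr_cont (hgbr : ∀ y z (h : E.σ y = E.σ z), ∃ hc : 𝒢.s (gbr y z h) = E.ρ z,
      𝒢.r (gbr y z h) = E.ρ y ∧ E.lact (gbr y z h) z hc = y) :
    Continuous (fun p : {p : Z × Z // E.σ p.1 = E.σ p.2} => gbr p.val.1 p.val.2 p.2) := by
  set F : {p : G × Z // 𝒢.s p.1 = E.ρ p.2} → Z × Z :=
    fun p => (E.lact p.1.1 p.1.2 p.2, p.1.2) with hF
  have hprop : IsProperMap F := E.lact_proper
  have hinj : Function.Injective F := by
    rintro ⟨⟨γ, z⟩, hpz⟩ ⟨⟨γ', z'⟩, hpz'⟩ hFe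
    have h2 : z = z' := congrArg Prod.snd hFe
    subst h2
    have h1 : E.lact γ z hpz = E.lact γ' z hpz' := congrArg Prod.fst hFe
    obtain rfl : γ = γ' := E.lact_cancel hpz hpz' h1
    rfl
  have hemb : IsClosedEmbedding F :=
    IsClosedEmbedding.of_continuous_injective_isClosedMap hprop.continuous hinj
      hprop.isClosedMap
  let Φ := hemb.isEmbedding.toHomeomorph
  have hrange : ∀ p : {p : Z × Z // E.σ p.1 = E.σ p.2}, p.val ∈ Set.range F := by
    rintro ⟨⟨y, z⟩, hσ⟩
    obtain ⟨γ, hγ, hl⟩ := E.σ_orbit y z hσ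
    exact ⟨⟨(γ, z), hγ⟩, by show (E.lact γ z hγ, z) = (y, z); rw [hl]⟩
  have key : (fun p : {p : Z × Z // E.σ p.1 = E.σ p.2} => gbr p.val.1 p.val.2 p.2)
      = fun p => (Φ.symm ⟨p.val, hrange p⟩).val.1 := by
    funext p
    set q := Φ.symm ⟨p.val, hrange p⟩ with hqdef
    have hq : F q = p.val := congrArg Subtype.val (Φ.apply_symm_apply ⟨p.val, hrange p⟩)
    have hz : q.val.2 = p.val.2 := congrArg Prod.snd hq
    have hl : E.lact q.val.1 q.val.2 q.2 = p.val.1 := congrArg Prod.fst hq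
    have hP : 𝒢.s q.val.1 = E.ρ p.val.2 := q.2.trans (congrArg E.ρ hz)
    have hl' : E.lact q.val.1 p.val.2 hP = p.val.1 :=
      (E.lact_congr rfl hz.symm hP q.2).trans hl
    exact gbr_eq hgbr p.2 hl'
  rw [key]
  exact continuous_fst.comp (continuous_subtype_val.comp
    (Φ.symm.continuous.comp (continuous_subtype_val.subtype_mk hrange)))

theorem hbr_cont (hhbr : ∀ y z (h : E.ρ y = E.ρ z), ∃ hc : E.σ y = ℋ.r (hbr y z h),
      ℋ.s (hbr y z h) = E.σ z ∧ E.ract y (hbr y z h) hc = z) :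
    Continuous (fun p : {p : Z × Z // E.ρ p.1 = E.ρ p.2} => hbr p.val.1 p.val.2 p.2) := by
  set F : {p : Z × H // E.σ p.1 = ℋ.r p.2} → Z × Z :=
    fun p => (E.ract p.1.1 p.1.2 p.2, p.1.1) with hF
  have hprop : IsProperMap F := E.ract_proper
  have hinj : Function.Injective F := by
    rintro ⟨⟨z, η⟩, hpz⟩ ⟨⟨z', η'⟩, hpz'⟩ hFe
    have h2 : z = z' := congrArg Prod.snd hFe
    subst h2
    have h1 : E.ract z η hpz = E.ract z η' hpz' := congrArg Prod.fst hFe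
    obtain rfl : η = η' := E.ract_cancel hpz hpz' h1
    rfl
  have hemb : IsClosedEmbedding F :=
    IsClosedEmbedding.of_continuous_injective_isClosedMap hprop.continuous hinj
      hprop.isClosedMap
  let Φ := hemb.isEmbedding.toHomeomorph
  have hrange : ∀ p : {p : Z × Z // E.ρ p.1 = E.ρ p.2},
      (p.val.2, p.val.1) ∈ Set.range F := by
    rintro ⟨⟨y, z⟩, hρ⟩
    obtain ⟨η, hη, hr⟩ := E.ρ_orbit z y hρ.symm
    exact ⟨⟨(y, η), hη⟩, by show (E.ract y η hη, y) = (z, y); rw [hr]⟩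
  have key : (fun p : {p : Z × Z // E.ρ p.1 = E.ρ p.2} => hbr p.val.1 p.val.2 p.2)
      = fun p => (Φ.symm ⟨(p.val.2, p.val.1), hrange p⟩).val.2 := by
    funext p
    set q := Φ.symm ⟨(p.val.2, p.val.1), hrange p⟩ with hqdef
    have hq : F q = (p.val.2, p.val.1) :=
      congrArg Subtype.val (Φ.apply_symm_apply ⟨(p.val.2, p.val.1), hrange p⟩)
    have h1 : q.val.1 = p.val.1 := congrArg Prod.snd hq
    have h2 : E.ract q.val.1 q.val.2 q.2 = p.val.2 := congrArg Prod.fst hq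
    have hP : E.σ p.val.1 = ℋ.r q.val.2 := (congrArg E.σ h1).symm.trans q.2
    have h2' : E.ract p.val.1 q.val.2 hP = p.val.2 :=
      (E.ract_congr h1.symm rfl hP q.2).trans h2
    exact hbr_eq hhbr p.2 h2'
  rw [key]
  refine continuous_snd.comp (continuous_subtype_val.comp (Φ.symm.continuous.comp ?_))
  exact Continuous.subtype_mk
    ((continuous_snd.comp continuous_subtype_val).prodMk
      (continuous_fst.comp continuous_subtype_val)) hrange

end ContAux
/-- the linking space `L = G ⊔ Z ⊔ Z^op ⊔ H` is a groupoid with the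
indicated range, source, multiplication and inversion. -/
theorem linking_is_groupoid {G H Z : Type*}
    [TopologicalSpace G] [LocallyCompactSpace G] [T2Space G]
    [TopologicalSpace H] [LocallyCompactSpace H] [T2Space H]
    [TopologicalSpace Z] [LocallyCompactSpace Z] [T2Space Z]
    (𝒢 : TopGpd G) (ℋ : TopGpd H) (E : GpdEquiv 𝒢 ℋ Z)
    (gbr : (y z : Z) → E.σ y = E.σ z → G)
    (hgbr : ∀ y z (h : E.σ y = E.σ z), ∃ hc : 𝒢.s (gbr y z h) = E.ρ z,
      𝒢.r (gbr y z h) = E.ρ y ∧ E.lact (gbr y z h) z hc = y)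
    (hbr : (y z : Z) → E.ρ y = E.ρ z → H)
    (hhbr : ∀ y z (h : E.ρ y = E.ρ z), ∃ hc : E.σ y = ℋ.r (hbr y z h),
      ℋ.s (hbr y z h) = E.σ z ∧ E.ract y (hbr y z h) hc = z) :
    ∃ 𝓛 : TopGpd (G ⊕ Z ⊕ Z ⊕ H),
      -- range map
      (∀ γ : G, 𝓛.r (inG γ) = inG (𝒢.r γ)) ∧
      (∀ z : Z, 𝓛.r (inZ z) = (inG (E.ρ z) : G ⊕ Z ⊕ Z ⊕ H)) ∧
      (∀ z : Z, 𝓛.r (inZo z) = (inH (E.σ z) : G ⊕ Z ⊕ Z ⊕ H)) ∧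
      (∀ η : H, 𝓛.r (inH η) = (inH (ℋ.r η) : G ⊕ Z ⊕ Z ⊕ H)) ∧
      -- source map
      (∀ γ : G, 𝓛.s (inG γ) = inG (𝒢.s γ)) ∧
      (∀ z : Z, 𝓛.s (inZ z) = (inH (E.σ z) : G ⊕ Z ⊕ Z ⊕ H)) ∧
      (∀ z : Z, 𝓛.s (inZo z) = (inG (E.ρ z) : G ⊕ Z ⊕ Z ⊕ H)) ∧
      (∀ η : H, 𝓛.s (inH η) = (inH (ℋ.s η) : G ⊕ Z ⊕ Z ⊕ H)) ∧
      -- inversion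
      (∀ γ : G, 𝓛.inv (inG γ) = inG (𝒢.inv γ)) ∧
      (∀ z : Z, 𝓛.inv (inZ z) = inZo z) ∧
      (∀ z : Z, 𝓛.inv (inZo z) = inZ z) ∧
      (∀ η : H, 𝓛.inv (inH η) = (inH (ℋ.inv η) : G ⊕ Z ⊕ Z ⊕ H)) ∧
      -- multiplication: the eight composable cases
      (∀ γ γ' (hc : 𝒢.s γ = 𝒢.r γ') (h : 𝓛.s (inG γ) = 𝓛.r (inG γ')),
        𝓛.mul (inG γ) (inG γ') h = inG (𝒢.mul γ γ' hc)) ∧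
      (∀ γ z (hc : 𝒢.s γ = E.ρ z) (h : 𝓛.s (inG γ) = 𝓛.r (inZ z)),
        𝓛.mul (inG γ) (inZ z) h = inZ (E.lact γ z hc)) ∧
      (∀ z η (hc : E.σ z = ℋ.r η) (h : 𝓛.s (inZ z) = 𝓛.r (inH η)),
        𝓛.mul (inZ z) (inH η) h = inZ (E.ract z η hc)) ∧
      (∀ y z (hc : E.σ y = E.σ z) (h : 𝓛.s (inZ y) = 𝓛.r (inZo z)),
        𝓛.mul (inZ y) (inZo z) h = inG (gbr y z hc)) ∧
      (∀ y z (hc : E.ρ y = E.ρ z) (h : 𝓛.s (inZo y) = 𝓛.r (inZ z)),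
        𝓛.mul (inZo y) (inZ z) h = inH (hbr y z hc)) ∧
      (∀ z γ (hc : 𝒢.s (𝒢.inv γ) = E.ρ z) (h : 𝓛.s (inZo z) = 𝓛.r (inG γ)),
        𝓛.mul (inZo z) (inG γ) h = inZo (E.lact (𝒢.inv γ) z hc)) ∧
      (∀ η z (hc : E.σ z = ℋ.r (ℋ.inv η)) (h : 𝓛.s (inH η) = 𝓛.r (inZo z)),
        𝓛.mul (inH η) (inZo z) h = inZo (E.ract z (ℋ.inv η) hc)) ∧
      (∀ η η' (hc : ℋ.s η = ℋ.r η') (h : 𝓛.s (inH η) = 𝓛.r (inH η')),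
        𝓛.mul (inH η) (inH η') h = inH (ℋ.mul η η' hc)) := by
  refine ⟨{ r := Lr E, s := Ls E, mul := Lmul E gbr hbr, inv := Linv E
            r_r := by
              rintro (γ|z|z|η)
              · exact congrArg inG (𝒢.r_r γ)
              · exact congrArg inG (E.ρ_unit z)
              · exact congrArg inH (E.σ_unit z)
              · exact congrArg inH (ℋ.r_r η)
            s_r := by
              rintro (γ|z|z|η)
              · exact congrArg inG (𝒢.s_r γ)
              · exact congrArg inG (E.s_ρ z)
              · exact congrArg inH (E.s_σ z)
              · exact congrArg inH (ℋ.s_r η)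
            r_s := by
              rintro (γ|z|z|η)
              · exact congrArg inG (𝒢.r_s γ)
              · exact congrArg inH (E.σ_unit z)
              · exact congrArg inG (E.ρ_unit z)
              · exact congrArg inH (ℋ.r_s η)
            s_s := by
              rintro (γ|z|z|η)
              · exact congrArg inG (𝒢.s_s γ)
              · exact congrArg inH (E.s_σ z)
              · exact congrArg inG (E.s_ρ z)
              · exact congrArg inH (ℋ.s_s η)
            r_mul := by
              rintro (γ|z|z|η) (γ'|w|w|η') h <;> try (simp [Ls, Lr, inG, inH] at h; done)
              · exact congrArg inG (𝒢.r_mul _ _ _)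
              · exact congrArg inG (E.ρ_lact _ _ _)
              · obtain ⟨hc, hr, ha⟩ := hgbr z w (Sum.inr.inj (Sum.inr.inj (Sum.inr.inj h)))
                exact congrArg inG hr
              · exact congrArg inG (E.ρ_ract _ _ _)
              · exact congrArg inH (E.σ_lact _ _ _)
              · obtain ⟨hc, hs', ha⟩ := hhbr z w (Sum.inl.inj h)
                exact congrArg inH hc.symm
              · exact congrArg inH ((E.σ_ract _ _ _).trans (ℋ.s_inv _))
              · exact congrArg inH (ℋ.r_mul _ _ _)
            s_mul := by
              rintro (γ|z|z|η) (γ'|w|w|η') h <;> try (simp [Ls, Lr, inG, inH] at h; done)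
              · exact congrArg inG (𝒢.s_mul _ _ _)
              · exact congrArg inH (E.σ_lact _ _ _)
              · obtain ⟨hc, hr, ha⟩ := hgbr z w (Sum.inr.inj (Sum.inr.inj (Sum.inr.inj h)))
                exact congrArg inG hc
              · exact congrArg inH (E.σ_ract _ _ _)
              · exact congrArg inG ((E.ρ_lact _ _ _).trans (𝒢.r_inv _))
              · obtain ⟨hc, hs', ha⟩ := hhbr z w (Sum.inl.inj h)
                exact congrArg inH hs'
              · exact congrArg inG (E.ρ_ract _ _ _)
              · exact congrArg inH (ℋ.s_mul _ _ _)
            unit_mul := by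
              rintro (γ|z|z|η) h
              · exact congrArg inG (𝒢.unit_mul γ (Sum.inl.inj h))
              · exact congrArg inZ (E.lact_unit z (Sum.inl.inj h))
              · exact congrArg inZo
                  ((E.ract_congr rfl (ℋ.inv_unit (E.σ_unit z)) _ (E.σ_unit z).symm).trans
                    (E.ract_unit z _))
              · exact congrArg inH (ℋ.unit_mul η _)
            mul_unit := by
              rintro (γ|z|z|η) h
              · exact congrArg inG (𝒢.mul_unit γ _)
              · exact congrArg inZ (E.ract_unit z _)
              · exact congrArg inZo
                  ((E.lact_congr (𝒢.inv_unit (E.ρ_unit z)) rfl _ (E.s_ρ z)).trans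
                    (E.lact_unit z _))
              · exact congrArg inH (ℋ.mul_unit η _)
            mul_assoc := by
              rintro (γ₁|z₁|z₁|η₁) (γ₂|z₂|z₂|η₂) (γ₃|z₃|z₃|η₃) h₁ h₂ h₃ h₄ <;>
                first
                | (simp [Ls, Lr, inG, inH] at h₁; done)
                | (simp [Ls, Lr, inG, inH] at h₂; done)
                | skip
              · exact congrArg inG (𝒢.mul_assoc _ _ _ _ _ _ _)
              · exact congrArg inZ (E.lact_mul _ _ _ _ _ _ _)
              · exact congrArg inG (gbr_lact hgbr _ _ _ _ _ _ _)
              · exact congrArg inZ (E.act_comm _ _ _ _ _ _ _)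
              · exact congrArg inG (gbr_lact_inv hgbr _ _ _ _ _ _ _).symm
              · exact congrArg inZ (gbr_hbr_mid hgbr hhbr _ _ _ _ _ _ _)
              · exact congrArg inG (gbr_ract hgbr _ _ _ _ _ _ _)
              · exact congrArg inZ (E.ract_mul _ _ _ _ _ _ _).symm
              · exact congrArg inZo (lact_inv_inv _ _ _ _ _ _ _)
              · exact congrArg inH (hbr_lact hhbr _ _ _ _ _ _ _)
              · exact congrArg inZo (ract_inv_eq_lact_inv hgbr hhbr _ _ _ _ _ _ _)
              · exact congrArg inH (hbr_ract hhbr _ _ _ _ _ _ _).symm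
              · exact congrArg inZo (E.act_comm _ _ _ _ _ _ _).symm
              · exact congrArg inH (hbr_ract_inv hhbr _ _ _ _ _ _ _)
              · exact congrArg inZo (ract_inv_mul _ _ _ _ _ _ _)
              · exact congrArg inH (ℋ.mul_assoc _ _ _ _ _ _ _)
            r_inv := by
              rintro (γ|z|z|η)
              · exact congrArg inG (𝒢.r_inv γ)
              · rfl
              · rfl
              · exact congrArg inH (ℋ.r_inv η)
            s_inv := by
              rintro (γ|z|z|η)
              · exact congrArg inG (𝒢.s_inv γ)
              · rfl
              · rfl
              · exact congrArg inH (ℋ.s_inv η)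
            inv_mul := by
              rintro (γ|z|z|η) h
              · exact congrArg inG (𝒢.inv_mul γ _)
              · obtain ⟨kc, ks, ka⟩ := hhbr z z (Sum.inl.inj h)
                exact congrArg inH (E.ract_free z _ kc ka)
              · obtain ⟨kc, kr, ka⟩ :=
                  hgbr z z (Sum.inr.inj (Sum.inr.inj (Sum.inr.inj h)))
                exact congrArg inG (E.lact_free _ z kc ka)
              · exact congrArg inH (ℋ.inv_mul η _)
            mul_inv := by
              rintro (γ|z|z|η) h
              · exact congrArg inG (𝒢.mul_inv γ _)
              · obtain ⟨kc, kr, ka⟩ :=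
                  hgbr z z (Sum.inr.inj (Sum.inr.inj (Sum.inr.inj h)))
                exact congrArg inG (E.lact_free _ z kc ka)
              · obtain ⟨kc, ks, ka⟩ := hhbr z z (Sum.inl.inj h)
                exact congrArg inH (E.ract_free z _ kc ka)
              · exact congrArg inH (ℋ.mul_inv η _)
            cont_r := by
              have cinG : Continuous (inG : G → G ⊕ Z ⊕ Z ⊕ H) := continuous_inl
              have cinH : Continuous (inH : H → G ⊕ Z ⊕ Z ⊕ H) :=
                continuous_inr.comp (continuous_inr.comp continuous_inr)
              exact (cinG.comp 𝒢.cont_r).sumElim ((cinG.comp E.ρ_cont).sumElim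
                ((cinH.comp E.σ_cont).sumElim (cinH.comp ℋ.cont_r)))
            cont_s := by
              have cinG : Continuous (inG : G → G ⊕ Z ⊕ Z ⊕ H) := continuous_inl
              have cinH : Continuous (inH : H → G ⊕ Z ⊕ Z ⊕ H) :=
                continuous_inr.comp (continuous_inr.comp continuous_inr)
              exact (cinG.comp 𝒢.cont_s).sumElim ((cinH.comp E.σ_cont).sumElim
                ((cinG.comp E.ρ_cont).sumElim (cinH.comp ℋ.cont_s)))
            cont_inv := by
              have cinG : Continuous (inG : G → G ⊕ Z ⊕ Z ⊕ H) := continuous_inl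
              have cinZ : Continuous (inZ : Z → G ⊕ Z ⊕ Z ⊕ H) :=
                continuous_inr.comp continuous_inl
              have cinZo : Continuous (inZo : Z → G ⊕ Z ⊕ Z ⊕ H) :=
                continuous_inr.comp (continuous_inr.comp continuous_inl)
              have cinH : Continuous (inH : H → G ⊕ Z ⊕ Z ⊕ H) :=
                continuous_inr.comp (continuous_inr.comp continuous_inr)
              exact (cinG.comp 𝒢.cont_inv).sumElim (cinZo.sumElim
                (cinZ.sumElim (cinH.comp ℋ.cont_inv)))
            cont_mul := by
              have hinG : IsOpenEmbedding (inG : G → G ⊕ Z ⊕ Z ⊕ H) := IsOpenEmbedding.inl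
              have hinZ : IsOpenEmbedding (inZ : Z → G ⊕ Z ⊕ Z ⊕ H) :=
                IsOpenEmbedding.inr.comp IsOpenEmbedding.inl
              have hinZo : IsOpenEmbedding (inZo : Z → G ⊕ Z ⊕ Z ⊕ H) :=
                IsOpenEmbedding.inr.comp (IsOpenEmbedding.inr.comp IsOpenEmbedding.inl)
              have hinH : IsOpenEmbedding (inH : H → G ⊕ Z ⊕ Z ⊕ H) :=
                IsOpenEmbedding.inr.comp (IsOpenEmbedding.inr.comp IsOpenEmbedding.inr)
              have cinZ : Continuous (inZ : Z → G ⊕ Z ⊕ Z ⊕ H) :=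
                continuous_inr.comp continuous_inl
              have cinZo : Continuous (inZo : Z → G ⊕ Z ⊕ Z ⊕ H) :=
                continuous_inr.comp (continuous_inr.comp continuous_inl)
              have cinH : Continuous (inH : H → G ⊕ Z ⊕ Z ⊕ H) :=
                continuous_inr.comp (continuous_inr.comp continuous_inr)
              rw [continuous_iff_continuousAt]
              rintro ⟨⟨x, y⟩, hp⟩
              rcases x with γ|z|z|η <;> rcases y with γ'|w|w|η' <;>
                try (simp [Ls, Lr, inG, inH] at hp; done)
              · -- G, G
                refine continuousAt_of_comp (e := fun p : {p : G × G // 𝒢.s p.1 = 𝒢.r p.2} =>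
                    (⟨(inG p.val.1, inG p.val.2), congrArg Sum.inl p.2⟩ :
                      {q : (G ⊕ Z ⊕ Z ⊕ H) × (G ⊕ Z ⊕ Z ⊕ H) // Ls E q.1 = Lr E q.2}))
                  ?_ ?_ ⟨(γ, γ'), Sum.inl.inj hp⟩
                · refine isOpenEmbedding_pairMap hinG hinG _ (fun _ => rfl) ?_
                  rintro ⟨⟨u, v⟩, hq⟩ ⟨a, rfl⟩ ⟨b, rfl⟩
                  exact ⟨⟨(a, b), Sum.inl.inj hq⟩, rfl⟩
                · exact continuous_inl.comp 𝒢.cont_mul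
              · -- G, Z
                refine continuousAt_of_comp (e := fun p : {p : G × Z // 𝒢.s p.1 = E.ρ p.2} =>
                    (⟨(inG p.val.1, inZ p.val.2), congrArg Sum.inl p.2⟩ :
                      {q : (G ⊕ Z ⊕ Z ⊕ H) × (G ⊕ Z ⊕ Z ⊕ H) // Ls E q.1 = Lr E q.2}))
                  ?_ ?_ ⟨(γ, w), Sum.inl.inj hp⟩
                · refine isOpenEmbedding_pairMap hinG hinZ _ (fun _ => rfl) ?_
                  rintro ⟨⟨u, v⟩, hq⟩ ⟨a, rfl⟩ ⟨b, rfl⟩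
                  exact ⟨⟨(a, b), Sum.inl.inj hq⟩, rfl⟩
                · exact cinZ.comp E.lact_cont
              · -- Z, Zo
                refine continuousAt_of_comp (e := fun p : {p : Z × Z // E.σ p.1 = E.σ p.2} =>
                    (⟨(inZ p.val.1, inZo p.val.2),
                      congrArg (fun a => (inH a : G ⊕ Z ⊕ Z ⊕ H)) p.2⟩ :
                      {q : (G ⊕ Z ⊕ Z ⊕ H) × (G ⊕ Z ⊕ Z ⊕ H) // Ls E q.1 = Lr E q.2}))
                  ?_ ?_ ⟨(z, w), Sum.inr.inj (Sum.inr.inj (Sum.inr.inj hp))⟩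
                · refine isOpenEmbedding_pairMap hinZ hinZo _ (fun _ => rfl) ?_
                  rintro ⟨⟨u, v⟩, hq⟩ ⟨a, rfl⟩ ⟨b, rfl⟩
                  exact ⟨⟨(a, b), Sum.inr.inj (Sum.inr.inj (Sum.inr.inj hq))⟩, rfl⟩
                · exact continuous_inl.comp (gbr_cont hgbr)
              · -- Z, H
                refine continuousAt_of_comp (e := fun p : {p : Z × H // E.σ p.1 = ℋ.r p.2} =>
                    (⟨(inZ p.val.1, inH p.val.2),
                      congrArg (fun a => (inH a : G ⊕ Z ⊕ Z ⊕ H)) p.2⟩ :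
                      {q : (G ⊕ Z ⊕ Z ⊕ H) × (G ⊕ Z ⊕ Z ⊕ H) // Ls E q.1 = Lr E q.2}))
                  ?_ ?_ ⟨(z, η'), Sum.inr.inj (Sum.inr.inj (Sum.inr.inj hp))⟩
                · refine isOpenEmbedding_pairMap hinZ hinH _ (fun _ => rfl) ?_
                  rintro ⟨⟨u, v⟩, hq⟩ ⟨a, rfl⟩ ⟨b, rfl⟩
                  exact ⟨⟨(a, b), Sum.inr.inj (Sum.inr.inj (Sum.inr.inj hq))⟩, rfl⟩
                · exact cinZ.comp E.ract_cont
              · -- Zo, G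
                refine continuousAt_of_comp (e := fun p : {p : Z × G // E.ρ p.1 = 𝒢.r p.2} =>
                    (⟨(inZo p.val.1, inG p.val.2), congrArg Sum.inl p.2⟩ :
                      {q : (G ⊕ Z ⊕ Z ⊕ H) × (G ⊕ Z ⊕ Z ⊕ H) // Ls E q.1 = Lr E q.2}))
                  ?_ ?_ ⟨(z, γ'), Sum.inl.inj hp⟩
                · refine isOpenEmbedding_pairMap hinZo hinG _ (fun _ => rfl) ?_
                  rintro ⟨⟨u, v⟩, hq⟩ ⟨a, rfl⟩ ⟨b, rfl⟩
                  exact ⟨⟨(a, b), Sum.inl.inj hq⟩, rfl⟩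
                · have hq : Continuous fun p : {p : Z × G // E.ρ p.1 = 𝒢.r p.2} =>
                      (⟨(𝒢.inv p.val.2, p.val.1), (𝒢.s_inv p.val.2).trans p.2.symm⟩ :
                        {p : G × Z // 𝒢.s p.1 = E.ρ p.2}) :=
                    Continuous.subtype_mk
                      ((𝒢.cont_inv.comp (continuous_snd.comp continuous_subtype_val)).prodMk
                        (continuous_fst.comp continuous_subtype_val)) _
                  exact cinZo.comp (E.lact_cont.comp hq)
              · -- Zo, Z
                refine continuousAt_of_comp (e := fun p : {p : Z × Z // E.ρ p.1 = E.ρ p.2} =>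
                    (⟨(inZo p.val.1, inZ p.val.2), congrArg Sum.inl p.2⟩ :
                      {q : (G ⊕ Z ⊕ Z ⊕ H) × (G ⊕ Z ⊕ Z ⊕ H) // Ls E q.1 = Lr E q.2}))
                  ?_ ?_ ⟨(z, w), Sum.inl.inj hp⟩
                · refine isOpenEmbedding_pairMap hinZo hinZ _ (fun _ => rfl) ?_
                  rintro ⟨⟨u, v⟩, hq⟩ ⟨a, rfl⟩ ⟨b, rfl⟩
                  exact ⟨⟨(a, b), Sum.inl.inj hq⟩, rfl⟩
                · exact cinH.comp (hbr_cont hhbr)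
              · -- H, Zo
                refine continuousAt_of_comp (e := fun p : {p : H × Z // ℋ.s p.1 = E.σ p.2} =>
                    (⟨(inH p.val.1, inZo p.val.2),
                      congrArg (fun a => (inH a : G ⊕ Z ⊕ Z ⊕ H)) p.2⟩ :
                      {q : (G ⊕ Z ⊕ Z ⊕ H) × (G ⊕ Z ⊕ Z ⊕ H) // Ls E q.1 = Lr E q.2}))
                  ?_ ?_ ⟨(η, w), Sum.inr.inj (Sum.inr.inj (Sum.inr.inj hp))⟩
                · refine isOpenEmbedding_pairMap hinH hinZo _ (fun _ => rfl) ?_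
                  rintro ⟨⟨u, v⟩, hq⟩ ⟨a, rfl⟩ ⟨b, rfl⟩
                  exact ⟨⟨(a, b), Sum.inr.inj (Sum.inr.inj (Sum.inr.inj hq))⟩, rfl⟩
                · have hq : Continuous fun p : {p : H × Z // ℋ.s p.1 = E.σ p.2} =>
                      (⟨(p.val.2, ℋ.inv p.val.1), p.2.symm.trans (ℋ.r_inv p.val.1).symm⟩ :
                        {p : Z × H // E.σ p.1 = ℋ.r p.2}) :=
                    Continuous.subtype_mk
                      ((continuous_snd.comp continuous_subtype_val).prodMk
                        (ℋ.cont_inv.comp (continuous_fst.comp continuous_subtype_val))) _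
                  exact cinZo.comp (E.ract_cont.comp hq)
              · -- H, H
                refine continuousAt_of_comp (e := fun p : {p : H × H // ℋ.s p.1 = ℋ.r p.2} =>
                    (⟨(inH p.val.1, inH p.val.2),
                      congrArg (fun a => (inH a : G ⊕ Z ⊕ Z ⊕ H)) p.2⟩ :
                      {q : (G ⊕ Z ⊕ Z ⊕ H) × (G ⊕ Z ⊕ Z ⊕ H) // Ls E q.1 = Lr E q.2}))
                  ?_ ?_ ⟨(η, η'), Sum.inr.inj (Sum.inr.inj (Sum.inr.inj hp))⟩
                · refine isOpenEmbedding_pairMap hinH hinH _ (fun _ => rfl) ?_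
                  rintro ⟨⟨u, v⟩, hq⟩ ⟨a, rfl⟩ ⟨b, rfl⟩
                  exact ⟨⟨(a, b), Sum.inr.inj (Sum.inr.inj (Sum.inr.inj hq))⟩, rfl⟩
                · exact cinH.comp ℋ.cont_mul },
    fun _ => rfl, fun _ => rfl, fun _ => rfl, fun _ => rfl,
    fun _ => rfl, fun _ => rfl, fun _ => rfl, fun _ => rfl,
    fun _ => rfl, fun _ => rfl, fun _ => rfl, fun _ => rfl,
    fun _ _ _ _ => rfl, fun _ _ _ _ => rfl, fun _ _ _ _ => rfl, fun _ _ _ _ => rfl,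
    fun _ _ _ _ => rfl, fun _ _ _ _ => rfl, fun _ _ _ _ => rfl, fun _ _ _ _ => rfl⟩
end

section
/- Let Z be a (G,H)-equivalence with Haar system {β^v} on H. For u ∈ G^(0) and any z ∈ Z with r(z) = u, the Radon measure σ_Z^u on Z defined by σ_Z^u(φ) = ∫_H φ(z·η) dβ^{s(z)}(η) is independent of the choice of z with r(z) = u. -/
open MeasureTheory Topology

/-- the measure `σ_Z^u`, `σ_Z^u(φ) = ∫_H φ(z·η) dβ^{s(z)}(η)` for any
`z` with `r(z) = u`, is independent of the choice of `z`. -/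
theorem sigmaZ_well_defined {G H Z : Type*}
    [TopologicalSpace G] [LocallyCompactSpace G] [T2Space G] [SecondCountableTopology G]
    [TopologicalSpace H] [LocallyCompactSpace H] [T2Space H] [SecondCountableTopology H]
    [MeasurableSpace H] [BorelSpace H]
    [TopologicalSpace Z] [LocallyCompactSpace Z] [T2Space Z] [SecondCountableTopology Z]
    (𝒢 : TopGpd G) (ℋ : TopGpd H) (E : GpdEquiv 𝒢 ℋ Z)
    -- the Haar system `{β^v}` on `H`
    (β : H → Measure H)
    (hβreg : ∀ v, (β v).Regular)
    -- each `β^v` is supported on `H^v = r⁻¹(v)`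
    (hβsupp : ∀ v, ℋ.r v = v → β v {η | ℋ.r η ≠ v} = 0)
    -- total version of multiplication on `H`, and left invariance of `β`
    (mH : H → H → H) (hmH : ∀ x y (h : ℋ.s x = ℋ.r y), mH x y = ℋ.mul x y h)
    (hβinv : ∀ η (f : H → ℂ), Continuous f → HasCompactSupport f →
      ∫ x, f (mH η x) ∂(β (ℋ.s η)) = ∫ x, f x ∂(β (ℋ.r η)))
    -- total version of the right `H`-action on `Z`
    (aR : Z → H → Z) (haR : ∀ z η (h : E.σ z = ℋ.r η), aR z η = E.ract z η h)
    -- conclusion: independence of the choice of `z` with `r(z) = u`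
    (z z' : Z) (hzz' : E.ρ z = E.ρ z')
    (φ : Z → ℂ) (hφc : Continuous φ) (hφs : HasCompactSupport φ) :
    ∫ η, φ (aR z η) ∂(β (E.σ z)) = ∫ η, φ (aR z' η) ∂(β (E.σ z')) := by

  -- choose `η₀` with `z · η₀ = z'`
  obtain ⟨η₀, h₀, hract⟩ := E.ρ_orbit z' z hzz'.symm
  subst hract
  set z' := E.ract z η₀ h₀ with hz'
  have hσz' : E.σ z' = ℋ.s η₀ := E.σ_ract z η₀ h₀
  set v := E.σ z with hv
  have hrv : ℋ.r v = v := E.σ_unit z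
  have hrη₀ : ℋ.r η₀ = v := h₀.symm
  -- the closed set `C = r⁻¹(v)` and the function `g = φ(z·-)` on it
  have hCclosed : IsClosed {η : H | ℋ.r η = v} := isClosed_eq ℋ.cont_r continuous_const
  let g : {η : H // ℋ.r η = v} → ℂ := fun η => φ (E.ract z η.1 η.2.symm)
  have hgcont : Continuous g := by
    have h1 : Continuous fun η : {η : H // ℋ.r η = v} =>
        (⟨(z, η.1), η.2.symm⟩ : {p : Z × H // E.σ p.1 = ℋ.r p.2}) :=
      Continuous.subtype_mk (continuous_const.prodMk continuous_subtype_val) _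
    exact hφc.comp (E.ract_cont.comp h1)
  -- Tietze extension of `g` to all of `H`
  obtain ⟨f₀, hf₀⟩ := ContinuousMap.exists_restrict_eq
    (Y := ℂ) (s := {η : H | ℋ.r η = v}) hCclosed (ContinuousMap.mk g hgcont)
  have hf₀g : ∀ η (hη : ℋ.r η = v), f₀ η = φ (E.ract z η hη.symm) := by
    intro η hη
    exact ContinuousMap.congr_fun hf₀ ⟨η, hη⟩
  -- the compact set carrying the support of `g`
  have hpre : IsCompact ((fun p : {p : Z × H // E.σ p.1 = ℋ.r p.2} =>
      (E.ract p.1.1 p.1.2 p.2, p.1.1)) ⁻¹' ((tsupport φ) ×ˢ ({z} : Set Z))) :=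
    E.ract_proper.isCompact_preimage (hφs.prod isCompact_singleton)
  set KH : Set H := (fun p : {p : Z × H // E.σ p.1 = ℋ.r p.2} => p.1.2) ''
      ((fun p : {p : Z × H // E.σ p.1 = ℋ.r p.2} =>
      (E.ract p.1.1 p.1.2 p.2, p.1.1)) ⁻¹' ((tsupport φ) ×ˢ ({z} : Set Z))) with hKH
  have hKHcomp : IsCompact KH :=
    hpre.image (continuous_snd.comp continuous_subtype_val)
  have hgsupp : ∀ η (hη : ℋ.r η = v), η ∉ KH → φ (E.ract z η hη.symm) = 0 := by
    intro η hη hηKH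
    by_contra hne
    exact hηKH ⟨⟨(z, η), hη.symm⟩, ⟨subset_tsupport φ hne, rfl⟩, rfl⟩
  -- cutoff function
  obtain ⟨χ, hχ1, -, hχsupp, -⟩ := exists_continuous_one_zero_of_isCompact
    hKHcomp isClosed_empty (Set.disjoint_empty KH)
  -- the continuous compactly supported function `f`
  set f : H → ℂ := fun η => χ η • f₀ η with hf
  have hfcont : Continuous f := χ.continuous.smul f₀.continuous
  have hfsupp : HasCompactSupport f := hχsupp.smul_right
  have hfC : ∀ η (hη : ℋ.r η = v), f η = φ (E.ract z η hη.symm) := by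
    intro η hη
    by_cases hmem : η ∈ KH
    · have : χ η = 1 := hχ1 hmem
      simp [hf, this, hf₀g η hη]
    · have h0 : φ (E.ract z η hη.symm) = 0 := hgsupp η hη hmem
      simp [hf, hf₀g η hη, h0]
  -- a.e. congruence principle
  have hae : ∀ v₀, ℋ.r v₀ = v₀ → ∀ (F F' : H → ℂ), (∀ η, ℋ.r η = v₀ → F η = F' η) →
      ∫ η, F η ∂(β v₀) = ∫ η, F' η ∂(β v₀) := by
    intro v₀ hv₀ F F' hFF'
    refine integral_congr_ae (MeasureTheory.ae_iff.mpr ?_)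
    refine measure_mono_null (fun η hη => ?_) (hβsupp v₀ hv₀)
    intro hr
    exact hη (hFF' η hr)
  -- step 1 : `∫ φ(z·η) dβ^v = ∫ f dβ^v`
  have step1 : ∫ η, φ (aR z η) ∂(β v) = ∫ η, f η ∂(β v) := by
    refine hae v hrv _ _ (fun η hη => ?_)
    rw [haR z η hη.symm, hfC η hη]
  -- step 2 : left invariance
  have step2 : ∫ x, f (mH η₀ x) ∂(β (ℋ.s η₀)) = ∫ x, f x ∂(β v) := by
    rw [← hrη₀]
    exact hβinv η₀ f hfcont hfsupp
  -- step 3 : `∫ f(η₀ x) dβ^{s η₀} = ∫ φ(z'·x) dβ^{s η₀}`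
  have step3 : ∫ x, f (mH η₀ x) ∂(β (ℋ.s η₀)) = ∫ x, φ (aR z' x) ∂(β (ℋ.s η₀)) := by
    refine hae (ℋ.s η₀) (ℋ.r_s η₀) _ _ (fun x hx => ?_)
    have hcomp : ℋ.s η₀ = ℋ.r x := hx.symm
    have hrmul : ℋ.r (ℋ.mul η₀ x hcomp) = v := by rw [ℋ.r_mul]; exact hrη₀
    have hz'x : E.σ z' = ℋ.r x := by rw [hσz']; exact hcomp
    rw [hmH η₀ x hcomp, hfC _ hrmul, haR z' x hz'x,
      E.ract_mul z η₀ x h₀ hcomp hrmul.symm hz'x]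
  rw [hσz', step1, ← step2, step3]
end

section
/- Let Z be a (G,H)-equivalence with Haar systems λ on G and β on H. The C_c(H)-valued pre-inner product ⟨φ,ψ⟩_H(η) = ∫_G \overline{φ(γ⁻¹·z)} ψ(γ⁻¹·z·η) dλ^{r(z)}(γ) (for any z with s(z) = r(η)) is well defined: the value is independent of the choice of z ∈ Z with s(z) = r(η). -/
open MeasureTheory Topology

/-- the `C_c(H)`-valued pre-inner product
`⟨φ,ψ⟩_H(η) = ∫_G conj(φ(γ⁻¹·z)) ψ(γ⁻¹·z·η) dλ^{r(z)}(γ)` is independent of the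
choice of `z` with `s(z) = r(η)`. -/
theorem innerH_well_defined {G H Z : Type*}
    [TopologicalSpace G] [LocallyCompactSpace G] [T2Space G] [SecondCountableTopology G]
    [MeasurableSpace G] [BorelSpace G]
    [TopologicalSpace H] [LocallyCompactSpace H] [T2Space H] [SecondCountableTopology H]
    [TopologicalSpace Z] [LocallyCompactSpace Z] [T2Space Z] [SecondCountableTopology Z]
    (𝒢 : TopGpd G) (ℋ : TopGpd H) (E : GpdEquiv 𝒢 ℋ Z)
    -- Haar system on `G`
    (lamG : G → Measure G) (hlamreg : ∀ u, (lamG u).Regular)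
    (hlamsupp : ∀ u, 𝒢.r u = u → lamG u {γ | 𝒢.r γ ≠ u} = 0)
    (mG : G → G → G) (hmG : ∀ x y (h : 𝒢.s x = 𝒢.r y), mG x y = 𝒢.mul x y h)
    (hlaminv : ∀ γ (f : G → ℂ), Continuous f → HasCompactSupport f →
      ∫ x, f (mG γ x) ∂(lamG (𝒢.s γ)) = ∫ x, f x ∂(lamG (𝒢.r γ)))
    -- total versions of the actions on `Z`
    (aL : G → Z → Z) (haL : ∀ γ z (h : 𝒢.s γ = E.ρ z), aL γ z = E.lact γ z h)
    (aR : Z → H → Z) (haR : ∀ z η (h : E.σ z = ℋ.r η), aR z η = E.ract z η h)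
    -- the functions
    (φ ψ : Z → ℂ) (hφ : Continuous φ) (hφs : HasCompactSupport φ)
    (hψ : Continuous ψ) (hψs : HasCompactSupport ψ)
    -- the data: `η ∈ H` and `z, z'` with `s(z) = s(z') = r(η)`
    (η : H) (z z' : Z) (hz : E.σ z = ℋ.r η) (hz' : E.σ z' = ℋ.r η) :
    ∫ γ, (starRingEnd ℂ) (φ (aL (𝒢.inv γ) z)) * ψ (aR (aL (𝒢.inv γ) z) η)
      ∂(lamG (E.ρ z)) =
    ∫ γ, (starRingEnd ℂ) (φ (aL (𝒢.inv γ) z')) * ψ (aR (aL (𝒢.inv γ) z') η)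
      ∂(lamG (E.ρ z')) := by
    classical
  -- choose `γ₀` with `γ₀ · z = z'`
  obtain ⟨γ₀, hsz, hγ₀⟩ := E.σ_orbit z' z (hz'.trans hz.symm)
  have hz'aL : aL γ₀ z = z' := by rw [haL _ _ hsz]; exact hγ₀
  -- basic algebraic lemmas in terms of the total actions
  have hsρ : ∀ w : Z, 𝒢.s (E.ρ w) = E.ρ w := by
    intro w
    calc 𝒢.s (E.ρ w) = 𝒢.s (𝒢.r (E.ρ w)) := by rw [E.ρ_unit]
      _ = 𝒢.r (E.ρ w) := 𝒢.s_r _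
      _ = E.ρ w := E.ρ_unit w
  have haLunit : ∀ w : Z, aL (E.ρ w) w = w := by
    intro w; rw [haL _ _ (hsρ w)]; exact E.lact_unit w _
  have hρaL : ∀ γ w (h : 𝒢.s γ = E.ρ w), E.ρ (aL γ w) = 𝒢.r γ := by
    intro γ w h; rw [haL _ _ h]; exact E.ρ_lact _ _ _
  have hσaL : ∀ γ w (h : 𝒢.s γ = E.ρ w), E.σ (aL γ w) = E.σ w := by
    intro γ w h; rw [haL _ _ h]; exact E.σ_lact _ _ _
  have haLmul : ∀ a b w (hab : 𝒢.s a = 𝒢.r b) (hbw : 𝒢.s b = E.ρ w),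
      aL (𝒢.mul a b hab) w = aL a (aL b w) := by
    intro a b w hab hbw
    rw [haL b w hbw, haL _ w (by rw [𝒢.s_mul]; exact hbw),
      haL a _ (by rw [E.ρ_lact]; exact hab)]
    exact E.lact_mul a b w hab hbw _ _
  have haL_inv_cancel : ∀ γ w (h : 𝒢.s γ = E.ρ w), aL (𝒢.inv γ) (aL γ w) = w := by
    intro γ w h
    have h1 : 𝒢.s (𝒢.inv γ) = 𝒢.r γ := 𝒢.s_inv γ
    rw [← haLmul (𝒢.inv γ) γ w h1 h, 𝒢.inv_mul γ h1, h, haLunit]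
  have haL_cancel_inv : ∀ γ w (h : 𝒢.r γ = E.ρ w), aL γ (aL (𝒢.inv γ) w) = w := by
    intro γ w h
    have h1 : 𝒢.s γ = 𝒢.r (𝒢.inv γ) := (𝒢.r_inv γ).symm
    have hbw : 𝒢.s (𝒢.inv γ) = E.ρ w := by rw [𝒢.s_inv]; exact h
    rw [← haLmul γ (𝒢.inv γ) w h1 hbw, 𝒢.mul_inv γ h1, h, haLunit]
  have hrz' : E.ρ z' = 𝒢.r γ₀ := by rw [← hz'aL, hρaL _ _ hsz]
  -- the closed set on which the integrand is canonical
  set Cset : Set G := {γ | 𝒢.r γ = E.ρ z'} with hCdef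
  have hCclosed : IsClosed Cset := isClosed_singleton.preimage 𝒢.cont_r
  have hm1pf : ∀ γ : Cset, 𝒢.s (𝒢.inv (γ : G)) = E.ρ z' := by
    intro γ; rw [𝒢.s_inv]; exact γ.2
  set m1 : Cset → Z := fun γ => E.lact (𝒢.inv (γ : G)) z' (hm1pf γ) with hm1def
  have hm1aL : ∀ γ : Cset, m1 γ = aL (𝒢.inv (γ : G)) z' := by
    intro γ; rw [haL _ _ (hm1pf γ)]
  have hm1cont : Continuous m1 :=
    E.lact_cont.comp (Continuous.subtype_mk
      ((𝒢.cont_inv.comp continuous_subtype_val).prodMk continuous_const) hm1pf)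
  have hm2pf : ∀ γ : Cset, E.σ (m1 γ) = ℋ.r η := by
    intro γ; rw [hm1aL, hσaL _ _ (hm1pf γ), hz']
  set m2 : Cset → Z := fun γ => E.ract (m1 γ) η (hm2pf γ) with hm2def
  have hm2aR : ∀ γ : Cset, m2 γ = aR (m1 γ) η := by
    intro γ; rw [haR _ _ (hm2pf γ)]
  have hm2cont : Continuous m2 :=
    E.ract_cont.comp (Continuous.subtype_mk (hm1cont.prodMk continuous_const) hm2pf)
  -- Tietze extension of the canonical integrand
  have hgcont : Continuous fun γ : Cset =>
      (starRingEnd ℂ) (φ (m1 γ)) * ψ (m2 γ) :=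
    (Complex.continuous_conj.comp (hφ.comp hm1cont)).mul (hψ.comp hm2cont)
  obtain ⟨f₀, hf₀⟩ := ContinuousMap.exists_restrict_eq (Y := ℂ) hCclosed ⟨_, hgcont⟩
  have hf₀val : ∀ γ : Cset, f₀ (γ : G) =
      (starRingEnd ℂ) (φ (aL (𝒢.inv (γ : G)) z')) * ψ (aR (aL (𝒢.inv (γ : G)) z') η) := by
    intro γ
    have := DFunLike.congr_fun hf₀ γ
    simpa [ContinuousMap.restrict, hm1aL γ, hm2aR γ, hm1aL] using this
  -- a compact set containing the support on `Cset`, by properness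
  set S : Set G := (fun p : {p : G × Z // 𝒢.s p.1 = E.ρ p.2} => p.1.1) ''
    ((fun p : {p : G × Z // 𝒢.s p.1 = E.ρ p.2} => (E.lact p.1.1 p.1.2 p.2, p.1.2)) ⁻¹'
      ({z'} ×ˢ tsupport φ)) with hSdef
  have hScomp : IsCompact S :=
    (E.lact_proper.isCompact_preimage (isCompact_singleton.prod hφs)).image
      (continuous_fst.comp continuous_subtype_val)
  have hmemS : ∀ γ, 𝒢.r γ = E.ρ z' → φ (aL (𝒢.inv γ) z') ≠ 0 → γ ∈ S := by
    intro γ hγ hne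
    have hinv : 𝒢.s (𝒢.inv γ) = E.ρ z' := by rw [𝒢.s_inv]; exact hγ
    have hsw : 𝒢.s γ = E.ρ (aL (𝒢.inv γ) z') := by
      rw [hρaL _ _ hinv, 𝒢.r_inv]
    refine ⟨⟨(γ, aL (𝒢.inv γ) z'), hsw⟩, ?_, rfl⟩
    constructor
    · show E.lact γ (aL (𝒢.inv γ) z') hsw = z'
      rw [← haL γ _ hsw]; exact haL_cancel_inv γ z' hγ
    · exact subset_tsupport φ hne
  -- cutoff function
  obtain ⟨L, hLcomp, hSL, -⟩ := exists_compact_between hScomp isOpen_univ (Set.subset_univ S)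
  obtain ⟨χ, hχsupp, hχ1, hχ01⟩ := exists_tsupport_one_of_isOpen_isClosed isOpen_interior
    (hLcomp.of_isClosed_subset isClosed_closure
      (closure_minimal interior_subset hLcomp.isClosed))
    hScomp.isClosed hSL
  -- the globally-defined continuous compactly supported function
  set F : G → ℂ := fun γ => (χ γ : ℂ) * f₀ γ with hFdef
  have hFcont : Continuous F := (Complex.continuous_ofReal.comp χ.continuous).mul f₀.continuous
  have hFsupp : HasCompactSupport F := by
    apply HasCompactSupport.mul_right
    apply HasCompactSupport.of_support_subset_isCompact hLcomp
    intro x hx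
    have : x ∈ tsupport χ := subset_tsupport _ (by
      intro h0; apply hx; simp [Function.mem_support] at hx ⊢; simp [h0])
    exact interior_subset (hχsupp this)
  -- Claim A: on `Cset`, `F` equals the canonical integrand
  have hA : ∀ γ, 𝒢.r γ = E.ρ z' → F γ =
      (starRingEnd ℂ) (φ (aL (𝒢.inv γ) z')) * ψ (aR (aL (𝒢.inv γ) z') η) := by
    intro γ hγ
    have hv := hf₀val ⟨γ, hγ⟩
    by_cases hne : φ (aL (𝒢.inv γ) z') = 0
    · simp only [hFdef, hv, hne, map_zero, zero_mul, mul_zero]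
    · have h1 : χ γ = 1 := hχ1 (hmemS γ hγ hne)
      simp only [hFdef, hv, h1, Complex.ofReal_one, one_mul]
  -- Claim B: on `{r x = ρ z}`, `F ∘ (γ₀ ·)` equals the integrand at `z`
  have hB : ∀ x, 𝒢.r x = E.ρ z → F (mG γ₀ x) =
      (starRingEnd ℂ) (φ (aL (𝒢.inv x) z)) * ψ (aR (aL (𝒢.inv x) z) η) := by
    intro x hx
    have hsx : 𝒢.s γ₀ = 𝒢.r x := by rw [hsz, hx]
    rw [hmG γ₀ x hsx]
    set y := 𝒢.mul γ₀ x hsx with hy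
    have hry : 𝒢.r y = E.ρ z' := by rw [𝒢.r_mul]; exact hrz'.symm
    rw [hA y hry]
    have hxinv : 𝒢.s (𝒢.inv x) = E.ρ z := by rw [𝒢.s_inv]; exact hx
    have hw : E.ρ (aL (𝒢.inv x) z) = 𝒢.s x := by rw [hρaL _ _ hxinv, 𝒢.r_inv]
    have key : aL y (aL (𝒢.inv x) z) = z' := by
      calc aL y (aL (𝒢.inv x) z) = aL γ₀ (aL x (aL (𝒢.inv x) z)) := haLmul γ₀ x _ hsx hw.symm
        _ = aL γ₀ z := by rw [haL_cancel_inv x z hx]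
        _ = z' := hz'aL
    have hyw : 𝒢.s y = E.ρ (aL (𝒢.inv x) z) := by rw [𝒢.s_mul]; exact hw.symm
    have : aL (𝒢.inv y) z' = aL (𝒢.inv x) z := by
      rw [← key, haL_inv_cancel y _ hyw]
    rw [this]
  -- conclude by left invariance
  have hmain := hlaminv γ₀ F hFcont hFsupp
  rw [hsz, ← hrz'] at hmain
  calc ∫ γ, (starRingEnd ℂ) (φ (aL (𝒢.inv γ) z)) * ψ (aR (aL (𝒢.inv γ) z) η)
        ∂(lamG (E.ρ z))
      = ∫ x, F (mG γ₀ x) ∂(lamG (E.ρ z)) := by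
        refine integral_congr_ae ?_
        rw [Filter.EventuallyEq, ae_iff]
        refine measure_mono_null ?_ (hlamsupp (E.ρ z) (E.ρ_unit z))
        intro x hx
        simp only [Set.mem_setOf_eq] at hx ⊢
        intro hrx
        exact hx (hB x hrx).symm
    _ = ∫ x, F x ∂(lamG (E.ρ z')) := hmain
    _ = ∫ γ, (starRingEnd ℂ) (φ (aL (𝒢.inv γ) z')) * ψ (aR (aL (𝒢.inv γ) z') η)
        ∂(lamG (E.ρ z')) := by
        refine integral_congr_ae ?_
        rw [Filter.EventuallyEq, ae_iff]
        refine measure_mono_null ?_ (hlamsupp (E.ρ z') (E.ρ_unit z'))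
        intro x hx
        simp only [Set.mem_setOf_eq] at hx ⊢
        intro hrx
        exact hx (hA x hrx)
end

section
/- Let Z be a (G,H)-equivalence with Haar systems, with C_c(Z) equipped with the left C_c(G)-valued inner product ⟨φ,ψ⟩_G(γ) = ∫_H φ(γ·w·η) \overline{ψ(w·η)} dβ^{s(w)}(η) and the right C_c(H)-valued inner product ⟨φ,ψ⟩_H. Then the compatibility (imprimitivity) condition holds: ⟨φ,ψ⟩_G · χ = φ · ⟨ψ,χ⟩_H for all φ, ψ, χ ∈ C_c(Z). -/
open MeasureTheory Topology

/-- Congruence in the groupoid argument of the left action. -/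
theorem GpdEquiv.lact_congr' {G H : Type*} [TopologicalSpace G] [TopologicalSpace H]
    {𝒢 : TopGpd G} {ℋ : TopGpd H} {Z : Type*} [TopologicalSpace Z]
    (E : GpdEquiv 𝒢 ℋ Z) {a a' : G} (z : Z) (hh : a = a')
    (h : 𝒢.s a = E.ρ z) (h' : 𝒢.s a' = E.ρ z) :
    E.lact a z h = E.lact a' z h' := by subst hh; rfl

/-- Congruence in the space argument of the left action. -/
theorem GpdEquiv.lact_congrz {G H : Type*} [TopologicalSpace G] [TopologicalSpace H]
    {𝒢 : TopGpd G} {ℋ : TopGpd H} {Z : Type*} [TopologicalSpace Z]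
    (E : GpdEquiv 𝒢 ℋ Z) (a : G) {z z' : Z} (hz : z = z')
    (h : 𝒢.s a = E.ρ z) (h' : 𝒢.s a = E.ρ z') :
    E.lact a z h = E.lact a z' h' := by subst hz; rfl

/-- Congruence in the groupoid argument of the right action. -/
theorem GpdEquiv.ract_congr' {G H : Type*} [TopologicalSpace G] [TopologicalSpace H]
    {𝒢 : TopGpd G} {ℋ : TopGpd H} {Z : Type*} [TopologicalSpace Z]
    (E : GpdEquiv 𝒢 ℋ Z) {b b' : H} (z : Z) (hh : b = b')
    (h : E.σ z = ℋ.r b) (h' : E.σ z = ℋ.r b') :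
    E.ract z b h = E.ract z b' h' := by subst hh; rfl

/-- the imprimitivity (compatibility) condition
`⟨φ,ψ⟩_G · χ = φ · ⟨ψ,χ⟩_H` for `φ, ψ, χ ∈ C_c(Z)`. -/
theorem imprimitivity_condition {G H Z : Type*}
    [TopologicalSpace G] [LocallyCompactSpace G] [T2Space G] [SecondCountableTopology G]
    [MeasurableSpace G] [BorelSpace G]
    [TopologicalSpace H] [LocallyCompactSpace H] [T2Space H] [SecondCountableTopology H]
    [MeasurableSpace H] [BorelSpace H]
    [TopologicalSpace Z] [LocallyCompactSpace Z] [T2Space Z] [SecondCountableTopology Z]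
    (𝒢 : TopGpd G) (ℋ : TopGpd H) (E : GpdEquiv 𝒢 ℋ Z)
    -- Haar system on `G`
    (lamG : G → Measure G) (hlamreg : ∀ u, (lamG u).Regular)
    (hlamsupp : ∀ u, 𝒢.r u = u → lamG u {γ | 𝒢.r γ ≠ u} = 0)
    (mG : G → G → G) (hmG : ∀ x y (h : 𝒢.s x = 𝒢.r y), mG x y = 𝒢.mul x y h)
    (hlaminv : ∀ γ (f : G → ℂ), Continuous f → HasCompactSupport f →
      ∫ x, f (mG γ x) ∂(lamG (𝒢.s γ)) = ∫ x, f x ∂(lamG (𝒢.r γ)))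
    -- Haar system on `H`
    (βH : H → Measure H) (hβreg : ∀ v, (βH v).Regular)
    (hβsupp : ∀ v, ℋ.r v = v → βH v {η | ℋ.r η ≠ v} = 0)
    (mH : H → H → H) (hmH : ∀ x y (h : ℋ.s x = ℋ.r y), mH x y = ℋ.mul x y h)
    (hβinv : ∀ η (f : H → ℂ), Continuous f → HasCompactSupport f →
      ∫ x, f (mH η x) ∂(βH (ℋ.s η)) = ∫ x, f x ∂(βH (ℋ.r η)))
    -- total versions of the actions on `Z`
    (aL : G → Z → Z) (haL : ∀ γ z (h : 𝒢.s γ = E.ρ z), aL γ z = E.lact γ z h)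
    (aR : Z → H → Z) (haR : ∀ z η (h : E.σ z = ℋ.r η), aR z η = E.ract z η h)
    -- the functions
    (φ ψ χ : Z → ℂ) (hφ : Continuous φ) (hφs : HasCompactSupport φ)
    (hψ : Continuous ψ) (hψs : HasCompactSupport ψ)
    (hχ : Continuous χ) (hχs : HasCompactSupport χ)
    -- the inner products `⟨φ,ψ⟩_G ∈ C_c(G)` and `⟨ψ,χ⟩_H ∈ C_c(H)`
    (ipG : G → ℂ)
    (hipG : ∀ γ w, E.ρ w = 𝒢.s γ →
      ipG γ = ∫ η, φ (aR (aL γ w) η) * (starRingEnd ℂ) (ψ (aR w η)) ∂(βH (E.σ w)))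
    (ipH : H → ℂ)
    (hipH : ∀ η z, E.σ z = ℋ.r η →
      ipH η = ∫ γ, (starRingEnd ℂ) (ψ (aL (𝒢.inv γ) z)) *
        χ (aR (aL (𝒢.inv γ) z) η) ∂(lamG (E.ρ z))) :
    ∀ z : Z,
      ∫ γ, ipG γ * χ (aL (𝒢.inv γ) z) ∂(lamG (E.ρ z)) =
      ∫ η, φ (aR z η) * ipH (ℋ.inv η) ∂(βH (E.σ z)) := by
  intro z
  classical
  -- measures and their regularity/finiteness instances
  haveI hregμ : (lamG (E.ρ z)).Regular := hlamreg _
  haveI hregν : (βH (E.σ z)).Regular := hβreg _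
  -- the supports of the Haar measures
  set C : Set G := {γ : G | 𝒢.r γ = E.ρ z} with hCdef
  set D : Set H := {η : H | ℋ.r η = E.σ z} with hDdef
  have hμC : lamG (E.ρ z) Cᶜ = 0 := hlamsupp (E.ρ z) (E.ρ_unit z)
  have hνD : βH (E.σ z) Dᶜ = 0 := hβsupp (E.σ z) (E.σ_unit z)
  have haeC : ∀ᵐ γ ∂(lamG (E.ρ z)), γ ∈ C := ae_iff.mpr hμC
  have haeD : ∀ᵐ η ∂(βH (E.σ z)), η ∈ D := ae_iff.mpr hνD
  have hCclosed : IsClosed C := isClosed_eq 𝒢.cont_r continuous_const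
  have hDclosed : IsClosed D := isClosed_eq ℋ.cont_r continuous_const
  -- basic groupoid facts
  have hsρ : 𝒢.s (E.ρ z) = E.ρ z := by
    have h := 𝒢.s_r (E.ρ z); rwa [E.ρ_unit z] at h
  have hinv : ∀ γ, γ ∈ C → 𝒢.s (𝒢.inv γ) = E.ρ z := fun γ hγ => (𝒢.s_inv γ).trans hγ
  have hρw : ∀ γ (hγ : γ ∈ C), E.ρ (aL (𝒢.inv γ) z) = 𝒢.s γ := by
    intro γ hγ
    rw [haL (𝒢.inv γ) z (hinv γ hγ), E.ρ_lact, 𝒢.r_inv]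
  have hσw : ∀ γ (hγ : γ ∈ C), E.σ (aL (𝒢.inv γ) z) = E.σ z := by
    intro γ hγ
    rw [haL (𝒢.inv γ) z (hinv γ hγ), E.σ_lact]
  have hρz' : ∀ η (hη : η ∈ D), E.ρ (aR z η) = E.ρ z := by
    intro η hη
    rw [haR z η hη.symm, E.ρ_ract]
  have hσz' : ∀ η (hη : η ∈ D), E.σ (aR z η) = ℋ.s η := by
    intro η hη
    rw [haR z η hη.symm, E.σ_ract]
  -- `γ · (γ⁻¹ · z) = z`
  have hA : ∀ γ (hγ : γ ∈ C), aL γ (aL (𝒢.inv γ) z) = z := by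
    intro γ hγ
    have h1 : 𝒢.s (𝒢.inv γ) = E.ρ z := hinv γ hγ
    have h2 : 𝒢.s γ = 𝒢.r (𝒢.inv γ) := (𝒢.r_inv γ).symm
    have h3 : 𝒢.s γ = E.ρ (E.lact (𝒢.inv γ) z h1) := by rw [E.ρ_lact, 𝒢.r_inv]
    have h4 : 𝒢.s (𝒢.mul γ (𝒢.inv γ) h2) = E.ρ z := by rw [𝒢.s_mul]; exact h1
    rw [haL (𝒢.inv γ) z h1, haL γ _ h3, ← E.lact_mul γ (𝒢.inv γ) z h2 h1 h4 h3]
    have h5 : 𝒢.mul γ (𝒢.inv γ) h2 = E.ρ z := (𝒢.mul_inv γ h2).trans hγ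
    rw [E.lact_congr' z h5 h4 hsρ]
    exact E.lact_unit z hsρ
  -- `(z · η) · η⁻¹ = z`
  have hB : ∀ η (hη : η ∈ D), aR (aR z η) (ℋ.inv η) = z := by
    intro η hη
    have h1 : E.σ z = ℋ.r η := hη.symm
    have h2 : ℋ.s η = ℋ.r (ℋ.inv η) := (ℋ.r_inv η).symm
    have h3 : E.σ (E.ract z η h1) = ℋ.r (ℋ.inv η) := by rw [E.σ_ract, ℋ.r_inv]
    have h4 : E.σ z = ℋ.r (ℋ.mul η (ℋ.inv η) h2) := by rw [ℋ.r_mul]; exact hη.symm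
    rw [haR z η h1, haR _ (ℋ.inv η) h3, ← E.ract_mul z η (ℋ.inv η) h1 h2 h4 h3]
    have h5 : ℋ.mul η (ℋ.inv η) h2 = E.σ z := (ℋ.mul_inv η h2).trans hη
    rw [E.ract_congr' z h5 h4 (E.σ_unit z).symm]
    exact E.ract_unit z (E.σ_unit z).symm
  -- commuting the two actions
  have hCcomm : ∀ γ η (hγ : γ ∈ C) (hη : η ∈ D),
      aR (aL (𝒢.inv γ) z) η = aL (𝒢.inv γ) (aR z η) := by
    intro γ η hγ hη
    have h1 : 𝒢.s (𝒢.inv γ) = E.ρ z := hinv γ hγ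
    have h2 : E.σ z = ℋ.r η := hη.symm
    have h3 : E.σ (E.lact (𝒢.inv γ) z h1) = ℋ.r η := by rw [E.σ_lact]; exact hη.symm
    have h4 : 𝒢.s (𝒢.inv γ) = E.ρ (E.ract z η h2) := by rw [E.ρ_ract]; exact h1
    rw [haL (𝒢.inv γ) z h1, haR _ η h3, haR z η h2, haL (𝒢.inv γ) _ h4]
    exact E.act_comm (𝒢.inv γ) z η h1 h2 h3 h4
  have hDcomm : ∀ γ η (hγ : γ ∈ C) (hη : η ∈ D),
      aR (aL (𝒢.inv γ) (aR z η)) (ℋ.inv η) = aL (𝒢.inv γ) z := by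
    intro γ η hγ hη
    have hα : 𝒢.s (𝒢.inv γ) = E.ρ (aR z η) := by rw [hρz' η hη]; exact hinv γ hγ
    have hβ2 : E.σ (aR z η) = ℋ.r (ℋ.inv η) := by rw [hσz' η hη, ℋ.r_inv]
    have h3 : E.σ (E.lact (𝒢.inv γ) (aR z η) hα) = ℋ.r (ℋ.inv η) := by
      rw [E.σ_lact]; exact hβ2
    have h4 : 𝒢.s (𝒢.inv γ) = E.ρ (E.ract (aR z η) (ℋ.inv η) hβ2) := by
      rw [E.ρ_ract]; exact hα
    rw [haL (𝒢.inv γ) (aR z η) hα, haR _ (ℋ.inv η) h3,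
      E.act_comm (𝒢.inv γ) (aR z η) (ℋ.inv η) hα hβ2 h3 h4]
    have hz : E.ract (aR z η) (ℋ.inv η) hβ2 = z := by
      rw [← haR (aR z η) (ℋ.inv η) hβ2]; exact hB η hη
    rw [E.lact_congrz (𝒢.inv γ) hz h4 (hinv γ hγ), ← haL (𝒢.inv γ) z (hinv γ hγ)]
  -- the common integrand
  set F : G → H → ℂ := fun γ η =>
    φ (aR z η) * (starRingEnd ℂ) (ψ (aL (𝒢.inv γ) (aR z η))) * χ (aL (𝒢.inv γ) z)
    with hFdef
  -- rewrite the left-hand side as an iterated integral of `F`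
  have hL : (∫ γ, ipG γ * χ (aL (𝒢.inv γ) z) ∂(lamG (E.ρ z))) =
      ∫ γ, ∫ η, F γ η ∂(βH (E.σ z)) ∂(lamG (E.ρ z)) := by
    refine integral_congr_ae ?_
    filter_upwards [haeC] with γ hγ
    rw [hipG γ (aL (𝒢.inv γ) z) (hρw γ hγ), hσw γ hγ, ← integral_mul_const]
    refine integral_congr_ae ?_
    filter_upwards [haeD] with η hη
    rw [hFdef]
    simp only []
    rw [hA γ hγ, hCcomm γ η hγ hη]
  -- rewrite the right-hand side as an iterated integral of `F`
  have hR : (∫ η, φ (aR z η) * ipH (ℋ.inv η) ∂(βH (E.σ z))) =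
      ∫ η, ∫ γ, F γ η ∂(lamG (E.ρ z)) ∂(βH (E.σ z)) := by
    refine integral_congr_ae ?_
    filter_upwards [haeD] with η hη
    have hσ' : E.σ (aR z η) = ℋ.r (ℋ.inv η) := by rw [hσz' η hη, ℋ.r_inv]
    rw [hipH (ℋ.inv η) (aR z η) hσ', hρz' η hη, ← integral_const_mul]
    refine integral_congr_ae ?_
    filter_upwards [haeC] with γ hγ
    rw [hDcomm γ η hγ hη, hFdef]
    simp only []
    ring
  -- a.e. membership in `C ×ˢ D` for the product measure
  have haeS : ∀ᵐ p ∂((lamG (E.ρ z)).prod (βH (E.σ z))), p ∈ C ×ˢ D := by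
    rw [ae_iff]
    have hcompl : {p : G × H | ¬ p ∈ C ×ˢ D} = (C ×ˢ D)ᶜ := rfl
    rw [hcompl, Set.compl_prod_eq_union]
    refine measure_union_null ?_ ?_
    · rw [Measure.prod_prod, hμC, zero_mul]
    · rw [Measure.prod_prod, hνD, mul_zero]
  have hres : ((lamG (E.ρ z)).prod (βH (E.σ z))).restrict (C ×ˢ D) =
      (lamG (E.ρ z)).prod (βH (E.σ z)) :=
    Measure.restrict_eq_self_of_ae_mem haeS
  -- joint continuity of `F` on `C ×ˢ D`
  have prf2 : ∀ p : (C ×ˢ D : Set (G × H)),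
      E.σ z = ℋ.r (p : G × H).2 := fun p => (p.2.2).symm
  have ht1 : Continuous fun p : (C ×ˢ D : Set (G × H)) => aR z (p : G × H).2 := by
    have hc : Continuous fun p : (C ×ˢ D : Set (G × H)) =>
        (⟨(z, (p : G × H).2), prf2 p⟩ : {q : Z × H // E.σ q.1 = ℋ.r q.2}) :=
      Continuous.subtype_mk
        (continuous_const.prodMk (continuous_snd.comp continuous_subtype_val)) _
    have h2 := E.ract_cont.comp hc
    have e : (fun p : (C ×ˢ D : Set (G × H)) => aR z (p : G × H).2) =
        fun p : (C ×ˢ D : Set (G × H)) => E.ract z (p : G × H).2 (prf2 p) :=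
      funext fun p => haR z _ _
    rw [e]; exact h2
  have prf3 : ∀ p : (C ×ˢ D : Set (G × H)),
      𝒢.s (𝒢.inv (p : G × H).1) = E.ρ (aR z (p : G × H).2) := by
    intro p
    rw [hρz' (p : G × H).2 p.2.2, 𝒢.s_inv]
    exact p.2.1
  have ht2 : Continuous fun p : (C ×ˢ D : Set (G × H)) =>
      aL (𝒢.inv (p : G × H).1) (aR z (p : G × H).2) := by
    have hc : Continuous fun p : (C ×ˢ D : Set (G × H)) =>
        (⟨(𝒢.inv (p : G × H).1, aR z (p : G × H).2), prf3 p⟩ :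
          {q : G × Z // 𝒢.s q.1 = E.ρ q.2}) :=
      Continuous.subtype_mk
        ((𝒢.cont_inv.comp (continuous_fst.comp continuous_subtype_val)).prodMk ht1) _
    have h2 := E.lact_cont.comp hc
    have e : (fun p : (C ×ˢ D : Set (G × H)) =>
          aL (𝒢.inv (p : G × H).1) (aR z (p : G × H).2)) =
        fun p : (C ×ˢ D : Set (G × H)) =>
          E.lact (𝒢.inv (p : G × H).1) (aR z (p : G × H).2) (prf3 p) :=
      funext fun p => haL _ _ _
    rw [e]; exact h2
  have prf4 : ∀ p : (C ×ˢ D : Set (G × H)),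
      𝒢.s (𝒢.inv (p : G × H).1) = E.ρ z := fun p => (𝒢.s_inv _).trans p.2.1
  have ht3 : Continuous fun p : (C ×ˢ D : Set (G × H)) =>
      aL (𝒢.inv (p : G × H).1) z := by
    have hc : Continuous fun p : (C ×ˢ D : Set (G × H)) =>
        (⟨(𝒢.inv (p : G × H).1, z), prf4 p⟩ : {q : G × Z // 𝒢.s q.1 = E.ρ q.2}) :=
      Continuous.subtype_mk
        ((𝒢.cont_inv.comp (continuous_fst.comp continuous_subtype_val)).prodMk
          continuous_const) _
    have h2 := E.lact_cont.comp hc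
    have e : (fun p : (C ×ˢ D : Set (G × H)) => aL (𝒢.inv (p : G × H).1) z) =
        fun p : (C ×ˢ D : Set (G × H)) => E.lact (𝒢.inv (p : G × H).1) z (prf4 p) :=
      funext fun p => haL _ _ _
    rw [e]; exact h2
  have hFcont : ContinuousOn (Function.uncurry F) (C ×ˢ D) := by
    rw [continuousOn_iff_continuous_restrict]
    show Continuous fun p : (C ×ˢ D : Set (G × H)) =>
      φ (aR z (p : G × H).2) *
        (starRingEnd ℂ) (ψ (aL (𝒢.inv (p : G × H).1) (aR z (p : G × H).2))) *
        χ (aL (𝒢.inv (p : G × H).1) z)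
    exact ((hφ.comp ht1).mul (RCLike.continuous_conj.comp (hψ.comp ht2))).mul
      (hχ.comp ht3)
  have hmeasS : MeasurableSet (C ×ˢ D : Set (G × H)) :=
    hCclosed.measurableSet.prod hDclosed.measurableSet
  have hAESM : AEStronglyMeasurable (Function.uncurry F)
      ((lamG (E.ρ z)).prod (βH (E.σ z))) := by
    rw [← hres]; exact hFcont.aestronglyMeasurable hmeasS
  -- compact sets controlling the support of `F`
  obtain ⟨Mφ, hMφ⟩ := hφs.exists_bound_of_continuous hφ
  obtain ⟨Mψ, hMψ⟩ := hψs.exists_bound_of_continuous hψ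
  obtain ⟨Mχ, hMχ⟩ := hχs.exists_bound_of_continuous hχ
  have hMφ0 : (0:ℝ) ≤ Mφ := le_trans (norm_nonneg _) (hMφ z)
  have hMψ0 : (0:ℝ) ≤ Mψ := le_trans (norm_nonneg _) (hMψ z)
  have hMχ0 : (0:ℝ) ≤ Mχ := le_trans (norm_nonneg _) (hMχ z)
  have hMnn : (0:ℝ) ≤ Mφ * Mψ * Mχ := mul_nonneg (mul_nonneg hMφ0 hMψ0) hMχ0
  set KG : Set G := (fun p : {p : G × Z // 𝒢.s p.1 = E.ρ p.2} => p.1.1) ''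
      ((fun p : {p : G × Z // 𝒢.s p.1 = E.ρ p.2} => (E.lact p.1.1 p.1.2 p.2, p.1.2)) ⁻¹'
        ({z} ×ˢ tsupport χ)) with hKGdef
  have hKG : IsCompact KG :=
    (E.lact_proper.isCompact_preimage (isCompact_singleton.prod hχs)).image
      (continuous_fst.comp continuous_subtype_val)
  have hmemKG : ∀ γ, γ ∈ C → χ (aL (𝒢.inv γ) z) ≠ 0 → γ ∈ KG := by
    intro γ hγ hne
    have h1 : 𝒢.s γ = E.ρ (aL (𝒢.inv γ) z) := (hρw γ hγ).symm
    refine ⟨⟨(γ, aL (𝒢.inv γ) z), h1⟩, ⟨?_, ?_⟩, rfl⟩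
    · show E.lact γ (aL (𝒢.inv γ) z) h1 ∈ ({z} : Set Z)
      rw [Set.mem_singleton_iff, ← haL γ _ h1]
      exact hA γ hγ
    · exact subset_tsupport χ hne
  set KH : Set H := (fun p : {p : Z × H // E.σ p.1 = ℋ.r p.2} => p.1.2) ''
      ((fun p : {p : Z × H // E.σ p.1 = ℋ.r p.2} => (E.ract p.1.1 p.1.2 p.2, p.1.1)) ⁻¹'
        (tsupport φ ×ˢ {z})) with hKHdef
  have hKH : IsCompact KH :=
    (E.ract_proper.isCompact_preimage (hφs.prod isCompact_singleton)).image
      (continuous_snd.comp continuous_subtype_val)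
  have hmemKH : ∀ η, η ∈ D → φ (aR z η) ≠ 0 → η ∈ KH := by
    intro η hη hne
    have h1 : E.σ z = ℋ.r η := hη.symm
    refine ⟨⟨(z, η), h1⟩, ⟨?_, rfl⟩, rfl⟩
    show E.ract z η h1 ∈ tsupport φ
    rw [← haR z η h1]
    exact subset_tsupport φ hne
  -- the dominating function
  have hg : Integrable ((KG ×ˢ KH).indicator fun _ => (Mφ * Mψ * Mχ : ℝ))
      ((lamG (E.ρ z)).prod (βH (E.σ z))) := by
    rw [integrable_indicator_iff (hKG.measurableSet.prod hKH.measurableSet)]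
    rw [integrableOn_const_iff]
    refine Or.inr ?_
    rw [Measure.prod_prod]
    exact ENNReal.mul_lt_top hKG.measure_lt_top hKH.measure_lt_top
  have hbound : ∀ᵐ p ∂((lamG (E.ρ z)).prod (βH (E.σ z))),
      ‖Function.uncurry F p‖ ≤ ((KG ×ˢ KH).indicator fun _ => (Mφ * Mψ * Mχ : ℝ)) p := by
    filter_upwards [haeS] with p hp
    by_cases h1 : φ (aR z p.2) = 0
    · have hz : Function.uncurry F p = 0 := by
        rw [hFdef]; show φ (aR z p.2) * _ * _ = 0; rw [h1, zero_mul, zero_mul]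
      rw [hz, norm_zero]
      exact Set.indicator_nonneg (fun _ _ => hMnn) p
    by_cases h2 : χ (aL (𝒢.inv p.1) z) = 0
    · have hz : Function.uncurry F p = 0 := by
        rw [hFdef]; show _ * χ (aL (𝒢.inv p.1) z) = 0; rw [h2, mul_zero]
      rw [hz, norm_zero]
      exact Set.indicator_nonneg (fun _ _ => hMnn) p
    · have hpK : p ∈ KG ×ˢ KH := ⟨hmemKG p.1 hp.1 h2, hmemKH p.2 hp.2 h1⟩
      rw [Set.indicator_of_mem hpK]
      have he : Function.uncurry F p =
          φ (aR z p.2) * (starRingEnd ℂ) (ψ (aL (𝒢.inv p.1) (aR z p.2))) *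
            χ (aL (𝒢.inv p.1) z) := rfl
      rw [he, norm_mul, norm_mul, RCLike.norm_conj]
      exact mul_le_mul (mul_le_mul (hMφ _) (hMψ _) (norm_nonneg _) hMφ0) (hMχ _)
        (norm_nonneg _) (mul_nonneg hMφ0 hMψ0)
  have hint : Integrable (Function.uncurry F) ((lamG (E.ρ z)).prod (βH (E.σ z))) :=
    hg.mono' hAESM hbound
  rw [hL, hR]
  exact MeasureTheory.integral_integral_swap hint
end

section
/- Let X be an A–B imprimitivity bimodule with Rieffel correspondence X-Ind on ideals, and let π be a representation of B with I ⊆ ker π for an ideal I ⊴ B. Then X-Ind(I) ⊆ ker(X-Ind π), where X-Ind π is the induced representation of A. In particular, if every representation factoring through B/I induces a representation factoring through A/X-Ind(I). -/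
/-- An `A`–`B` imprimitivity bimodule: a complete complex normed space `X` which is a
left Hilbert `A`-module and a right Hilbert `B`-module with full inner products
satisfying the compatibility condition `⟨x,y⟩_A · z = x · ⟨y,z⟩_B`. -/
structure ImprimitivityBimodule (A B X : Type*)
    [NonUnitalCStarAlgebra A] [NonUnitalCStarAlgebra B]
    [NormedAddCommGroup X] [Module ℂ X] [CompleteSpace X] where
  smulA : A → X → X
  smulB : X → B → X
  innerA : X → X → A
  innerB : X → X → B
  smulA_add : ∀ a x y, smulA a (x + y) = smulA a x + smulA a y
  add_smulA : ∀ a a' x, smulA (a + a') x = smulA a x + smulA a' x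
  smulA_mul : ∀ a a' x, smulA (a * a') x = smulA a (smulA a' x)
  smulB_add : ∀ x y b, smulB (x + y) b = smulB x b + smulB y b
  add_smulB : ∀ x b b', smulB x (b + b') = smulB x b + smulB x b'
  smulB_mul : ∀ x b b', smulB x (b * b') = smulB (smulB x b) b'
  smulAB_assoc : ∀ a x b, smulB (smulA a x) b = smulA a (smulB x b)
  innerA_add_left : ∀ x y z, innerA (x + y) z = innerA x z + innerA y z
  innerA_smulA_left : ∀ a x y, innerA (smulA a x) y = a * innerA x y
  innerA_star : ∀ x y, star (innerA x y) = innerA y x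
  innerB_add_right : ∀ x y z, innerB x (y + z) = innerB x y + innerB x z
  innerB_smulB_right : ∀ x y b, innerB x (smulB y b) = innerB x y * b
  innerB_star : ∀ x y, star (innerB x y) = innerB y x
  innerA_pos : ∀ x, ∃ a : A, innerA x x = star a * a
  innerB_pos : ∀ x, ∃ b : B, innerB x x = star b * b
  compat : ∀ x y z, smulA (innerA x y) z = smulB x (innerB y z)
  fullA : closure ↑(Submodule.span ℂ {a : A | ∃ x y, a = innerA x y}) = (Set.univ : Set A)
  fullB : closure ↑(Submodule.span ℂ {b : B | ∃ x y, b = innerB x y}) = (Set.univ : Set B)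
  norm_eq_A : ∀ x, ‖x‖ ^ 2 = ‖innerA x x‖
  norm_eq_B : ∀ x, ‖x‖ ^ 2 = ‖innerB x x‖

/-- if `π` is a representation of `B` with `I ⊆ ker π` for an ideal
`I ⊴ B`, then `X-Ind(I) ⊆ ker(X-Ind π)`, where `X-Ind π` is the induced
representation of `A` (realized on any Hilbert space `𝓗'` receiving a densely-spanning
map `t : X → 𝓗 → 𝓗'` implementing the interior tensor product `X ⊗_B 𝓗`). -/
theorem rieffel_induction_kernel {A B X : Type*}
    [NonUnitalCStarAlgebra A] [NonUnitalCStarAlgebra B]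
    [NormedAddCommGroup X] [Module ℂ X] [CompleteSpace X]
    (M : ImprimitivityBimodule A B X)
    {𝓗 : Type*} [NormedAddCommGroup 𝓗] [InnerProductSpace ℂ 𝓗] [CompleteSpace 𝓗]
    -- the representation `π` of `B` on `𝓗`
    (π : B → (𝓗 →L[ℂ] 𝓗))
    (hπadd : ∀ b b', π (b + b') = π b + π b')
    (hπsmul : ∀ (c : ℂ) b, π (c • b) = c • π b)
    (hπmul : ∀ b b', π (b * b') = (π b).comp (π b'))
    (hπstar : ∀ b (h k : 𝓗), inner ℂ (π b h) k = (inner ℂ h (π (star b) k) : ℂ))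
    -- the ideal `I ⊴ B`, contained in `ker π`
    (I : Submodule ℂ B) (hIclosed : IsClosed (I : Set B))
    (hIleft : ∀ b c : B, b ∈ I → c * b ∈ I)
    (hIright : ∀ b c : B, b ∈ I → b * c ∈ I)
    (hIker : ∀ b ∈ I, π b = 0)
    -- the induced representation `X-Ind π` of `A` on `𝓗' = X ⊗_B 𝓗`
    {𝓗' : Type*} [NormedAddCommGroup 𝓗'] [InnerProductSpace ℂ 𝓗'] [CompleteSpace 𝓗']
    (ρ : A → (𝓗' →L[ℂ] 𝓗'))
    (hρadd : ∀ a a', ρ (a + a') = ρ a + ρ a')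
    (hρsmul : ∀ (c : ℂ) a, ρ (c • a) = c • ρ a)
    (hρcont : Continuous ρ)
    (t : X → 𝓗 → 𝓗')
    (htdense : Dense (↑(Submodule.span ℂ {v : 𝓗' | ∃ x h, v = t x h}) : Set 𝓗'))
    (htinner : ∀ (x y : X) (h k : 𝓗),
      (inner ℂ (t x h) (t y k) : ℂ) = inner ℂ h (π (M.innerB x y) k))
    (htact : ∀ (a : A) (x : X) (h : 𝓗), ρ a (t x h) = t (M.smulA a x) h) :
    -- conclusion: `X-Ind(I) ⊆ ker (X-Ind π)`
    ∀ a ∈ closure ↑(Submodule.span ℂ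
        {a : A | ∃ x y i, i ∈ I ∧ a = M.innerA (M.smulB x i) y}),
      ρ a = 0 := by

  -- `t (x · b) h = 0` whenever `b ∈ I`
  have key : ∀ (x : X) (b : B), b ∈ I → ∀ h : 𝓗, t (M.smulB x b) h = 0 := by
    intro x b hb h
    have hmem : M.innerB (M.smulB x b) (M.smulB x b) ∈ I := by
      have heq : M.innerB (M.smulB x b) (M.smulB x b)
          = (star b * M.innerB x x) * b := by
        rw [M.innerB_smulB_right]
        congr 1
        rw [← M.innerB_star, M.innerB_smulB_right, star_mul, M.innerB_star]
      rw [heq]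
      exact hIleft _ _ hb
    have h0 : (inner ℂ (t (M.smulB x b) h) (t (M.smulB x b) h) : ℂ) = 0 := by
      rw [htinner, hIker _ hmem]
      simp
    exact inner_self_eq_zero.mp h0
  -- `ρ` vanishes on generators
  have gen : ∀ (x y : X) (i : B), i ∈ I → ρ (M.innerA (M.smulB x i) y) = 0 := by
    intro x y i hi
    set a := M.innerA (M.smulB x i) y with ha
    have hker : ∀ v : 𝓗', v ∈ LinearMap.ker (ρ a : 𝓗' →ₗ[ℂ] 𝓗') := by
      have hsub : {v : 𝓗' | ∃ z h, v = t z h} ⊆ (LinearMap.ker (ρ a : 𝓗' →ₗ[ℂ] 𝓗') : Set 𝓗') := by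
        rintro v ⟨z, h, rfl⟩
        have : ρ a (t z h) = t (M.smulB x (i * M.innerB y z)) h := by
          rw [htact, ha, M.compat, M.smulB_mul]
        simp only [SetLike.mem_coe, LinearMap.mem_ker, ContinuousLinearMap.coe_coe]
        rw [this, key x _ (hIright _ _ hi) h]
      have hspan : (Submodule.span ℂ {v : 𝓗' | ∃ z h, v = t z h} : Set 𝓗')
          ⊆ (LinearMap.ker (ρ a : 𝓗' →ₗ[ℂ] 𝓗') : Set 𝓗') := by
        intro v hv
        exact Submodule.span_le.mpr hsub hv
      have hclosed : IsClosed ((LinearMap.ker (ρ a : 𝓗' →ₗ[ℂ] 𝓗') : Submodule ℂ 𝓗') : Set 𝓗') := by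
        have heq : ((LinearMap.ker (ρ a : 𝓗' →ₗ[ℂ] 𝓗') : Submodule ℂ 𝓗') : Set 𝓗') = (ρ a) ⁻¹' {0} := by
          ext v; simp
        rw [heq]
        exact isClosed_singleton.preimage (ρ a).continuous
      intro v
      have : v ∈ closure ((Submodule.span ℂ {v : 𝓗' | ∃ z h, v = t z h} : Submodule ℂ 𝓗') : Set 𝓗') := by
        rw [htdense.closure_eq]; trivial
      exact closure_minimal hspan hclosed this
    ext v
    simpa using hker v
  have hρ0 : ρ 0 = 0 := by simpa using hρsmul 0 0
  -- closed under span and closure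
  intro a ha
  have hspan : (Submodule.span ℂ
      {a : A | ∃ x y i, i ∈ I ∧ a = M.innerA (M.smulB x i) y} : Set A)
      ⊆ {a : A | ρ a = 0} := by
    intro a ha
    induction ha using Submodule.span_induction with
    | mem a h => obtain ⟨x, y, i, hi, rfl⟩ := h; exact gen x y i hi
    | zero => exact hρ0
    | add a b _ _ hra hrb => show ρ (a + b) = 0; rw [hρadd, hra, hrb]; simp
    | smul c a _ hra => show ρ (c • a) = 0; rw [hρsmul, hra]; simp
  have hclosed : IsClosed {a : A | ρ a = 0} :=
    isClosed_singleton.preimage hρcont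
  exact closure_minimal hspan hclosed ha
end

section
/- Let A be a C*-algebra and p, q = 1 − p complementary full projections in the multiplier algebra M(A). Then pAq is a pAp–qAq imprimitivity bimodule with inner products ⟨x,y⟩_{pAp} = x y* and ⟨x,y⟩_{qAq} = x* y; in particular pAp and qAq are Morita equivalent. -/
/-- Raeburn–Williams Theorem 3.19: if `p` and `q = 1 - p` are
complementary full projections in the multiplier algebra `M` of a C*-algebra `A`
(realized as a closed two-sided ideal of the unital C*-algebra `M`), then `pAq` is a
`pAp`–`qAq` imprimitivity bimodule with inner products `⟨x,y⟩_{pAp} = x y*` and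
`⟨x,y⟩_{qAq} = x* y`; in particular `pAp` and `qAq` are Morita equivalent. -/
theorem full_corners_imprimitivity {M : Type*} [CStarAlgebra M]
    -- `A` is a closed two-sided *-closed ideal of the unital C*-algebra `M`
    (A : Submodule ℂ M) (hAclosed : IsClosed (A : Set M))
    (hAleft : ∀ a m : M, a ∈ A → m * a ∈ A)
    (hAright : ∀ a m : M, a ∈ A → a * m ∈ A)
    (hAstar : ∀ a : M, a ∈ A → star a ∈ A)
    -- `p` and `q = 1 - p` are complementary projections in `M`
    (p q : M) (hp : star p = p ∧ p * p = p) (hq : q = 1 - p)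
    -- both projections are full: the closed ideal of `A` generated by the corner is `A`
    (hpfull : closure ↑(Submodule.span ℂ
      {m : M | ∃ a ∈ A, ∃ b ∈ A, m = a * (p * b)}) = (A : Set M))
    (hqfull : closure ↑(Submodule.span ℂ
      {m : M | ∃ a ∈ A, ∃ b ∈ A, m = a * (q * b)}) = (A : Set M)) :
    -- `pAq` is a `pAp`–`qAq` imprimitivity bimodule:
    -- the corners are stable under the module actions,
    (∀ a x : M, a ∈ A → x ∈ A → (p * a * p) * (p * x * q) = p * ((p * a * p) * x) * q) ∧
    (∀ x b : M, x ∈ A → b ∈ A → (p * x * q) * (q * b * q) = p * (x * (q * b * q)) * q) ∧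
    -- the inner products take values in the corners,
    (∀ x y : M, x ∈ A → y ∈ A →
      (p * x * q) * star (p * y * q) ∈ A ∧
      p * ((p * x * q) * star (p * y * q)) * p = (p * x * q) * star (p * y * q)) ∧
    (∀ x y : M, x ∈ A → y ∈ A →
      star (p * x * q) * (p * y * q) ∈ A ∧
      q * (star (p * x * q) * (p * y * q)) * q = star (p * x * q) * (p * y * q)) ∧
    -- the compatibility (imprimitivity) condition `⟨x,y⟩_{pAp} · z = x · ⟨y,z⟩_{qAq}`,
    (∀ x y z : M, (x * star y) * z = x * (star y * z)) ∧
    -- positivity of the inner products,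
    (∀ x : M, ∃ c : M, star (p * x * q) * (p * x * q) = star c * c) ∧
    (∀ x : M, ∃ c : M, (p * x * q) * star (p * x * q) = star c * c) ∧
    -- both inner products are full,
    (closure ↑(Submodule.span ℂ {m : M | ∃ x ∈ A, ∃ y ∈ A,
        m = (p * x * q) * star (p * y * q)}) =
      {m : M | m ∈ A ∧ p * m * p = m}) ∧
    (closure ↑(Submodule.span ℂ {m : M | ∃ x ∈ A, ∃ y ∈ A,
        m = star (p * x * q) * (p * y * q)}) =
      {m : M | m ∈ A ∧ q * m * q = m}) ∧
    -- and the C*-norm condition `‖x‖² = ‖⟨x,x⟩‖` holds on `pAq`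
    (∀ x : M, ‖p * x * q‖ ^ 2 = ‖star (p * x * q) * (p * x * q)‖) := by
  obtain ⟨hps, hpp⟩ := hp
  have hqs : star q = q := by rw [hq]; simp [hps]
  have hqq : q * q = q := by
    rw [hq, sub_mul, one_mul, mul_sub, mul_one, hpp]; abel
  have hpL : ∀ t : M, p * (p * t) = p * t := fun t => by rw [← mul_assoc, hpp]
  have hqL : ∀ t : M, q * (q * t) = q * t := fun t => by rw [← mul_assoc, hqq]
  -- the left inner product is a corner element
  have key1 : ∀ x y : M, x ∈ A → y ∈ A →
      (p * x * q) * star (p * y * q) ∈ A ∧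
      p * ((p * x * q) * star (p * y * q)) * p = (p * x * q) * star (p * y * q) := by
    intro x y hx hy
    refine ⟨hAright _ _ (hAright _ _ (hAleft x p hx)), ?_⟩
    simp only [star_mul, hps, hqs, mul_assoc, hpp, hqq, hpL, hqL]
  -- the right inner product is a corner element
  have key2 : ∀ x y : M, x ∈ A → y ∈ A →
      star (p * x * q) * (p * y * q) ∈ A ∧
      q * (star (p * x * q) * (p * y * q)) * q = star (p * x * q) * (p * y * q) := by
    intro x y hx hy
    refine ⟨hAleft _ _ (hAright _ _ (hAleft y p hy)), ?_⟩
    simp only [star_mul, hps, hqs, mul_assoc, hpp, hqq, hpL, hqL]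
  refine ⟨?_, ?_, key1, key2, fun x y z => mul_assoc _ _ _,
    fun x => ⟨p * x * q, rfl⟩, fun x => ⟨star (p * x * q), by rw [star_star]⟩,
    ?_, ?_, ?_⟩
  · intro a x _ _
    simp only [mul_assoc, hpL]
  · intro x b _ _
    simp only [mul_assoc, hqL, hqq]
  · -- fullness of the left inner product
    have hSc : IsClosed {m : M | m ∈ A ∧ p * m * p = m} :=
      hAclosed.inter (isClosed_eq (by fun_prop) continuous_id)
    apply Set.Subset.antisymm
    · apply closure_minimal _ hSc
      intro m hm
      induction hm using Submodule.span_induction with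
      | mem v hv =>
        obtain ⟨x, hx, y, hy, rfl⟩ := hv
        exact key1 x y hx hy
      | zero => exact ⟨A.zero_mem, by simp⟩
      | add u v _ _ hu hv =>
        refine ⟨A.add_mem hu.1 hv.1, ?_⟩
        have h2u : p * u * p = u := hu.2
        have h2v : p * v * p = v := hv.2
        show p * (u + v) * p = u + v
        rw [mul_add, add_mul, h2u, h2v]
      | smul c v _ hv =>
        refine ⟨A.smul_mem c hv.1, ?_⟩
        have h2v : p * v * p = v := hv.2
        show p * (c • v) * p = c • v
        rw [mul_smul_comm, smul_mul_assoc, h2v]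
    · rintro m ⟨hmA, hmp⟩
      have hm' : m ∈ closure (Submodule.span ℂ
          {m : M | ∃ a ∈ A, ∃ b ∈ A, m = a * (q * b)} : Set M) := hqfull ▸ hmA
      have hmap : Set.MapsTo (fun v : M => p * v * p)
          (Submodule.span ℂ {m : M | ∃ a ∈ A, ∃ b ∈ A, m = a * (q * b)} : Set M)
          (Submodule.span ℂ {m : M | ∃ x ∈ A, ∃ y ∈ A,
            m = (p * x * q) * star (p * y * q)} : Set M) := by
        intro v hv
        induction hv using Submodule.span_induction with
        | mem v hv =>
          obtain ⟨a, ha, b, hb, rfl⟩ := hv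
          apply Submodule.subset_span
          refine ⟨a, ha, star b, hAstar b hb, ?_⟩
          simp only [star_mul, hps, hqs, star_star, mul_assoc, hpp, hqq, hpL, hqL]
        | zero => show p * 0 * p ∈ _ ; simp
        | add u v _ _ hu hv =>
          show p * (u + v) * p ∈ _
          have h : p * (u + v) * p = p * u * p + p * v * p := by
            rw [mul_add, add_mul]
          rw [h]; exact Submodule.add_mem _ hu hv
        | smul c v _ hv =>
          show p * (c • v) * p ∈ _
          have h : p * (c • v) * p = c • (p * v * p) := by
            rw [mul_smul_comm, smul_mul_assoc]
          rw [h]; exact Submodule.smul_mem _ c hv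
      have := map_mem_closure (f := fun v : M => p * v * p) (by fun_prop) hm' hmap
      simpa [hmp] using this
  · -- fullness of the right inner product
    have hSc : IsClosed {m : M | m ∈ A ∧ q * m * q = m} :=
      hAclosed.inter (isClosed_eq (by fun_prop) continuous_id)
    apply Set.Subset.antisymm
    · apply closure_minimal _ hSc
      intro m hm
      induction hm using Submodule.span_induction with
      | mem v hv =>
        obtain ⟨x, hx, y, hy, rfl⟩ := hv
        exact key2 x y hx hy
      | zero => exact ⟨A.zero_mem, by simp⟩
      | add u v _ _ hu hv =>
        refine ⟨A.add_mem hu.1 hv.1, ?_⟩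
        have h2u : q * u * q = u := hu.2
        have h2v : q * v * q = v := hv.2
        show q * (u + v) * q = u + v
        rw [mul_add, add_mul, h2u, h2v]
      | smul c v _ hv =>
        refine ⟨A.smul_mem c hv.1, ?_⟩
        have h2v : q * v * q = v := hv.2
        show q * (c • v) * q = c • v
        rw [mul_smul_comm, smul_mul_assoc, h2v]
    · rintro m ⟨hmA, hmq⟩
      have hm' : m ∈ closure (Submodule.span ℂ
          {m : M | ∃ a ∈ A, ∃ b ∈ A, m = a * (p * b)} : Set M) := hpfull ▸ hmA
      have hmap : Set.MapsTo (fun v : M => q * v * q)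
          (Submodule.span ℂ {m : M | ∃ a ∈ A, ∃ b ∈ A, m = a * (p * b)} : Set M)
          (Submodule.span ℂ {m : M | ∃ x ∈ A, ∃ y ∈ A,
            m = star (p * x * q) * (p * y * q)} : Set M) := by
        intro v hv
        induction hv using Submodule.span_induction with
        | mem v hv =>
          obtain ⟨a, ha, b, hb, rfl⟩ := hv
          apply Submodule.subset_span
          refine ⟨star a, hAstar a ha, b, hb, ?_⟩
          simp only [star_mul, hps, hqs, star_star, mul_assoc, hpp, hqq, hpL, hqL]
        | zero => show q * 0 * q ∈ _ ; simp
        | add u v _ _ hu hv =>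
          show q * (u + v) * q ∈ _
          have h : q * (u + v) * q = q * u * q + q * v * q := by
            rw [mul_add, add_mul]
          rw [h]; exact Submodule.add_mem _ hu hv
        | smul c v _ hv =>
          show q * (c • v) * q ∈ _
          have h : q * (c • v) * q = c • (q * v * q) := by
            rw [mul_smul_comm, smul_mul_assoc]
          rw [h]; exact Submodule.smul_mem _ c hv
      have := map_mem_closure (f := fun v : M => q * v * q) (by fun_prop) hm' hmap
      simpa [hmq] using this
  · intro x
    rw [sq, ← CStarRing.norm_star_mul_self]
end
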